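/- arXiv:2405.12828 — 7 statements merged into one kernel-verified Lean document; each statement's English description precedes it below -/
import Mathlib

section
/- Let λ₁ ≤ λ₂ ≤ ... ≤ λₙ be real numbers and w₁, ..., wₙ be nonnegative real numbers with M = max{w₁,...,wₙ} > 0. Let S = Σᵢ wᵢ and k = ⌊S/M⌋. Then Σᵢ₌₁ⁿ λᵢwᵢ ≥ (S/k) · Σᵢ₌₁ᵏ λᵢ. -/
open Finset

lemma abel_key (n : ℕ) (f v : ℕ → ℝ)
    (hf : ∀ i, i + 1 < n → f i ≤ f (i + 1))
    (hV : ∀ m, m < n → 0 ≤ ∑ i ∈ Finset.range m, v i)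
    (hV0 : ∑ i ∈ Finset.range n, v i = 0) :
    ∑ i ∈ Finset.range n, f i * v i ≤ 0 := by
  have h := Finset.sum_range_by_parts f v n
  simp only [smul_eq_mul] at h
  rw [h, hV0, mul_zero, zero_sub, neg_nonpos]
  apply Finset.sum_nonneg
  intro i hi
  rw [Finset.mem_range] at hi
  have h1 : i + 1 < n := by omega
  exact mul_nonneg (by linarith [hf i h1]) (hV (i + 1) h1)

/-- If `λ₁ ≤ ⋯ ≤ λₙ` are reals, `w₁, …, wₙ ≥ 0` with maximum `M > 0`,
`S = ∑ wᵢ` and `k = ⌊S/M⌋`, then `∑ λᵢ wᵢ ≥ (S/k) ∑_{i=1}^{k} λᵢ`. -/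
theorem statement0 (n : ℕ) (l w : Fin n → ℝ) (hl : Monotone l)
    (hw : ∀ i, 0 ≤ w i) (M : ℝ) (hub : ∀ i, w i ≤ M) (hmem : ∃ i, w i = M)
    (hpos : 0 < M) :
    (∑ i, l i * w i) ≥
      ((∑ i, w i) / (⌊(∑ i, w i) / M⌋₊ : ℝ)) *
        ∑ i ∈ Finset.univ.filter (fun i : Fin n => (i : ℕ) < ⌊(∑ j, w j) / M⌋₊), l i := by
  obtain ⟨i₀, hi₀⟩ := hmem
  set S : ℝ := ∑ i, w i with hS
  set k : ℕ := ⌊S / M⌋₊ with hk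
  -- basic facts
  have hMS : M ≤ S := hi₀ ▸ Finset.single_le_sum (fun i _ => hw i) (Finset.mem_univ i₀)
  have hS0 : 0 < S := lt_of_lt_of_le hpos hMS
  have hk1 : 1 ≤ k := Nat.le_floor (by rw [le_div_iff₀ hpos]; simpa using hMS)
  have hkpos : (0:ℝ) < k := by exact_mod_cast hk1
  have hkn : k ≤ n := by
    have hSn : S ≤ n * M := by
      calc S ≤ ∑ _i : Fin n, M := Finset.sum_le_sum (fun i _ => hub i)
        _ = n * M := by simp [mul_comm]
    exact Nat.floor_le_of_le (by rw [div_le_iff₀ hpos] at *; exact_mod_cast hSn)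
  have hkS : (k : ℝ) * M ≤ S := by
    have := Nat.floor_le (show (0:ℝ) ≤ S / M from le_of_lt (div_pos hS0 hpos))
    rw [← hk] at this
    calc (k : ℝ) * M ≤ (S / M) * M := by nlinarith
      _ = S := by field_simp
  set c : ℝ := S / k with hc
  have hMc : M ≤ c := by rw [hc, le_div_iff₀ hkpos]; linarith [hkS]
  -- ℕ-indexed versions
  set f : ℕ → ℝ := fun i => if h : i < n then l ⟨i, h⟩ else 0 with hf
  set wn : ℕ → ℝ := fun i => if h : i < n then w ⟨i, h⟩ else 0 with hwn
  set cn : ℕ → ℝ := fun i => if i < k then c else 0 with hcn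
  have hwnle : ∀ i, wn i ≤ M := by
    intro i; simp only [hwn]; split
    · exact hub _
    · exact le_of_lt hpos
  have hwnn : ∀ i, 0 ≤ wn i := by
    intro i; simp only [hwn]; split
    · exact hw _
    · exact le_refl 0
  -- sum of wn over range n = S
  have hsumw : ∑ i ∈ Finset.range n, wn i = S := by
    rw [hS, ← Fin.sum_univ_eq_sum_range]
    exact Finset.sum_congr rfl (fun i _ => by simp [hwn, i.isLt])
  have hsumc : ∑ i ∈ Finset.range n, cn i = S := by
    have : ∑ i ∈ Finset.range n, cn i = ∑ i ∈ Finset.range k, c := by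
      rw [← Finset.sum_range_add_sum_Ico _ hkn]
      have h1 : ∑ i ∈ Finset.range k, cn i = ∑ i ∈ Finset.range k, c :=
        Finset.sum_congr rfl (fun i hi => by simp [hcn, Finset.mem_range.mp hi])
      have h2 : ∑ i ∈ Finset.Ico k n, cn i = 0 :=
        Finset.sum_eq_zero (fun i hi => by
          simp [hcn, Nat.not_lt.mpr (Finset.mem_Ico.mp hi).1])
      rw [h1, h2, add_zero]
    rw [this, Finset.sum_const, Finset.card_range, nsmul_eq_mul, hc]
    field_simp
  -- partial sums
  have hpartw : ∀ m, m ≤ n → ∑ i ∈ Finset.range m, wn i ≤ S := by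
    intro m hm
    rw [← hsumw]
    exact Finset.sum_le_sum_of_subset_of_nonneg
      (Finset.range_subset_range.mpr hm) (fun i _ _ => hwnn i)
  have hpart : ∀ m, m < n → 0 ≤ ∑ i ∈ Finset.range m, (cn i - wn i) := by
    intro m hm
    rw [Finset.sum_sub_distrib, sub_nonneg]
    by_cases hmk : m ≤ k
    · have hc1 : ∑ i ∈ Finset.range m, cn i = m * c := by
        rw [Finset.sum_congr rfl (fun i hi => show cn i = c by
          simp [hcn, lt_of_lt_of_le (Finset.mem_range.mp hi) hmk]),
          Finset.sum_const, Finset.card_range, nsmul_eq_mul]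
      rw [hc1]
      calc ∑ i ∈ Finset.range m, wn i ≤ ∑ _i ∈ Finset.range m, M :=
            Finset.sum_le_sum (fun i _ => hwnle i)
        _ = m * M := by simp [mul_comm]
        _ ≤ m * c := by
            apply mul_le_mul_of_nonneg_left hMc (by positivity)
    · have hc2 : ∑ i ∈ Finset.range m, cn i = S := by
        have : ∑ i ∈ Finset.range m, cn i = ∑ i ∈ Finset.range n, cn i := by
          rw [← Finset.sum_range_add_sum_Ico (f := cn) (le_of_lt hm)]
          have : ∑ i ∈ Finset.Ico m n, cn i = 0 :=
            Finset.sum_eq_zero (fun i hi => by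
              have : k ≤ i := le_trans (le_of_not_ge hmk) (Finset.mem_Ico.mp hi).1
              simp [hcn, Nat.not_lt.mpr this])
          rw [this, add_zero]
        rw [this, hsumc]
      rw [hc2]
      exact hpartw m (le_of_lt hm)
  have htot : ∑ i ∈ Finset.range n, (cn i - wn i) = 0 := by
    rw [Finset.sum_sub_distrib, hsumw, hsumc, sub_self]
  have hfm : ∀ i, i + 1 < n → f i ≤ f (i + 1) := by
    intro i hi
    have h1 : i < n := by omega
    simp only [hf, dif_pos h1, dif_pos hi]
    exact hl (by simp [Fin.le_def])
  have key := abel_key n f (fun i => cn i - wn i) hfm hpart htot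
  -- rewrite key
  have hsplit : ∑ i ∈ Finset.range n, f i * (cn i - wn i)
      = ∑ i ∈ Finset.range n, f i * cn i - ∑ i ∈ Finset.range n, f i * wn i := by
    rw [← Finset.sum_sub_distrib]; exact Finset.sum_congr rfl (fun i _ => by ring)
  rw [hsplit, sub_nonpos] at key
  -- identify both sides
  have hlhs : ∑ i ∈ Finset.range n, f i * wn i = ∑ i, l i * w i := by
    rw [← Fin.sum_univ_eq_sum_range]
    exact Finset.sum_congr rfl (fun i _ => by simp [hf, hwn, i.isLt])
  have hrhs : ∑ i ∈ Finset.range n, f i * cn i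
      = c * ∑ i ∈ Finset.univ.filter (fun i : Fin n => (i : ℕ) < k), l i := by
    rw [Finset.mul_sum, ← Fin.sum_univ_eq_sum_range (fun i => f i * cn i),
      ← Finset.sum_filter_add_sum_filter_not Finset.univ (fun i : Fin n => (i : ℕ) < k)]
    have h2 : ∑ i ∈ Finset.univ.filter (fun i : Fin n => ¬ (i : ℕ) < k),
        f (i : ℕ) * cn (i : ℕ) = 0 :=
      Finset.sum_eq_zero (fun i hi => by
        have := (Finset.mem_filter.mp hi).2
        simp [hcn, this])
    rw [h2, add_zero]
    exact Finset.sum_congr rfl (fun i hi => by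
      have := (Finset.mem_filter.mp hi).2
      simp [hf, hcn, this, i.isLt, mul_comm])
  rw [hlhs, hrhs] at key
  exact key
end

section
/- Let λ₁ ≤ λ₂ ≤ ... ≤ λₙ be real numbers and w₁, ..., wₙ be nonnegative real numbers with M = max{w₁,...,wₙ} > 0, S = Σᵢ wᵢ, and k = ⌊S/M⌋. If Σᵢ₌₁ᵏ λᵢ > 0 then Σᵢ₌₁ⁿ λᵢwᵢ > 0, and if Σᵢ₌₁ᵏ λᵢ ≥ 0 then Σᵢ₌₁ⁿ λᵢwᵢ ≥ 0. -/
open Finset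

/-- With `λ₁ ≤ ⋯ ≤ λₙ`, nonnegative weights `w` with maximum `M > 0`,
`S = ∑ wᵢ`, `k = ⌊S/M⌋`: if `∑_{i=1}^{k} λᵢ > 0` then `∑ λᵢwᵢ > 0`, and if
`∑_{i=1}^{k} λᵢ ≥ 0` then `∑ λᵢwᵢ ≥ 0`. -/
theorem statement1 (n : ℕ) (l w : Fin n → ℝ) (hl : Monotone l)
    (hw : ∀ i, 0 ≤ w i) (M : ℝ) (hub : ∀ i, w i ≤ M) (hmem : ∃ i, w i = M)
    (hpos : 0 < M) :
    (0 < (∑ i ∈ Finset.univ.filter (fun i : Fin n => (i : ℕ) < ⌊(∑ j, w j) / M⌋₊), l i) →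
        0 < ∑ i, l i * w i) ∧
    (0 ≤ (∑ i ∈ Finset.univ.filter (fun i : Fin n => (i : ℕ) < ⌊(∑ j, w j) / M⌋₊), l i) →
        0 ≤ ∑ i, l i * w i) := by
  obtain ⟨i0, hi0⟩ := hmem
  have hn : 0 < n := i0.pos
  set S : ℝ := ∑ j, w j with hS
  set k : ℕ := ⌊S / M⌋₊ with hk
  set L : ℕ → ℝ := fun i => l ⟨min i (n-1), by omega⟩ with hL
  set W : ℕ → ℝ := fun i => if h : i < n then w ⟨i, h⟩ else 0 with hWdef
  set G : ℕ → ℝ := fun j => min ((j : ℝ) * M) S with hG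
  have hLmono : Monotone L := by
    intro a b hab
    exact hl (by simp only [Fin.mk_le_mk]; omega)
  have hLeq : ∀ i : Fin n, L (i : ℕ) = l i := by
    intro i
    have : (⟨min (i : ℕ) (n-1), by omega⟩ : Fin n) = i := by
      apply Fin.ext; simp; omega
    simp only [hL, this]
  have hWnonneg : ∀ i, 0 ≤ W i := by
    intro i; simp only [hWdef]
    split
    · exact hw _
    · exact le_refl 0
  have hWub : ∀ i, W i ≤ M := by
    intro i; simp only [hWdef]
    split
    · exact hub _
    · exact le_of_lt hpos
  have hSW : S = ∑ i ∈ range n, W i := by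
    rw [hS, ← Fin.sum_univ_eq_sum_range W n]
    refine Finset.sum_congr rfl fun i _ => ?_
    simp only [hWdef, dif_pos i.isLt]
  have hS0 : 0 ≤ S := Finset.sum_nonneg fun i _ => hw i
  have hMS : M ≤ S := hi0 ▸ Finset.single_le_sum (fun i _ => hw i) (mem_univ i0)
  have hk1 : 1 ≤ k := by
    rw [hk]
    exact Nat.le_floor (by rw [Nat.cast_one, le_div_iff₀ hpos, one_mul]; exact hMS)
  have hkM : (k : ℝ) * M ≤ S := by
    have := Nat.floor_le (a := S / M) (div_nonneg hS0 hpos.le)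
    rw [← hk] at this
    calc (k : ℝ) * M ≤ (S / M) * M := by nlinarith
    _ = S := div_mul_cancel₀ S hpos.ne'
  have hSk1 : S < ((k : ℝ) + 1) * M := by
    have := Nat.lt_floor_add_one (S / M)
    rw [← hk] at this
    calc S = (S / M) * M := (div_mul_cancel₀ S hpos.ne').symm
    _ < ((k : ℝ) + 1) * M := by nlinarith
  have hSnM : S ≤ (n : ℝ) * M := by
    rw [hSW]
    calc ∑ i ∈ range n, W i ≤ ∑ i ∈ range n, M := Finset.sum_le_sum fun i _ => hWub i
    _ = (n : ℝ) * M := by simp [mul_comm]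
  have hkn : k ≤ n := by
    by_contra h
    push_neg at h
    have : ((n : ℝ) + 1) * M ≤ (k : ℝ) * M := by
      have : (n : ℝ) + 1 ≤ (k : ℝ) := by exact_mod_cast h
      nlinarith
    nlinarith
  -- head sums bounded by G
  have hHG : ∀ j ≤ n, ∑ i ∈ range j, W i ≤ G j := by
    intro j hj
    refine le_min ?_ ?_
    · calc ∑ i ∈ range j, W i ≤ ∑ i ∈ range j, M := Finset.sum_le_sum fun i _ => hWub i
      _ = (j : ℝ) * M := by simp [mul_comm]
    · rw [hSW]
      exact Finset.sum_le_sum_of_subset_of_nonneg (range_subset_range.2 hj)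
        (fun i _ _ => hWnonneg i)
  have hG0 : G 0 = 0 := by simp [hG, hS0]
  have hGn : G n = S := by simp only [hG]; exact min_eq_right hSnM
  -- key comparison: ∑ L W ≥ ∑ L * (G (i+1) - G i)
  have hcomp : ∑ i ∈ range n, L i * (G (i+1) - G i) ≤ ∑ i ∈ range n, L i * W i := by
    have hkey : 0 ≤ ∑ i ∈ range n, L i * (W i - (G (i+1) - G i)) := by
      have hbp := Finset.sum_range_by_parts L (fun i => W i - (G (i+1) - G i)) n
      simp only [smul_eq_mul] at hbp
      rw [hbp]
      have htel : ∀ m, ∑ i ∈ range m, (W i - (G (i+1) - G i))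
          = (∑ i ∈ range m, W i) - (G m - G 0) := by
        intro m
        rw [Finset.sum_sub_distrib, Finset.sum_range_sub (f := G)]
      have h1 : ∑ i ∈ range n, (W i - (G (i+1) - G i)) = 0 := by
        rw [htel, hGn, hG0, ← hSW]; ring
      rw [h1, mul_zero, zero_sub, neg_nonneg]
      calc ∑ i ∈ range (n-1), (L (i+1) - L i) * ∑ j ∈ range (i+1), (W j - (G (j+1) - G j))
          ≤ ∑ i ∈ range (n-1), (0:ℝ) := by
            refine Finset.sum_le_sum fun i hi => ?_
            rw [htel, hG0, sub_zero]
            have h2 : (∑ j ∈ range (i+1), W j) - G (i+1) ≤ 0 := by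
              rw [sub_nonpos]
              exact hHG (i+1) (by simp at hi; omega)
            exact mul_nonpos_of_nonneg_of_nonpos
              (sub_nonneg.2 (hLmono (Nat.le_succ i))) h2
      _ = 0 := by simp
    rw [← sub_nonneg, ← Finset.sum_sub_distrib]
    simpa only [mul_sub] using hkey
  -- compute the ideal sum
  have hGstep1 : ∀ i < k, G (i+1) - G i = M := by
    intro i hik
    have h1 : ((i : ℝ) + 1) * M ≤ S := by
      have : ((i : ℝ) + 1) ≤ (k : ℝ) := by exact_mod_cast hik
      nlinarith
    have h2 : (i : ℝ) * M ≤ S := by nlinarith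
    simp only [hG, Nat.cast_add, Nat.cast_one]
    rw [min_eq_left h1, min_eq_left h2]
    ring
  have hGstepk : G (k+1) - G k = S - (k : ℝ) * M := by
    simp only [hG, Nat.cast_add, Nat.cast_one]
    rw [min_eq_right hSk1.le, min_eq_left hkM]
  have hGstep0 : ∀ i, k < i → G (i+1) - G i = 0 := by
    intro i hki
    have h1 : S ≤ (i : ℝ) * M := by
      have : (k : ℝ) + 1 ≤ (i : ℝ) := by exact_mod_cast hki
      nlinarith
    have h2 : S ≤ ((i : ℝ) + 1) * M := by nlinarith
    simp only [hG, Nat.cast_add, Nat.cast_one]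
    rw [min_eq_right h1, min_eq_right h2]
    ring
  have hideal : ∑ i ∈ range n, L i * (G (i+1) - G i)
      = M * (∑ i ∈ range k, L i) + (S - (k : ℝ) * M) * L k := by
    rw [Finset.range_eq_Ico, ← Finset.sum_Ico_consecutive _ (Nat.zero_le k) hkn,
      ← Finset.range_eq_Ico]
    have hA : ∑ i ∈ range k, L i * (G (i+1) - G i) = M * ∑ i ∈ range k, L i := by
      rw [Finset.mul_sum]
      refine Finset.sum_congr rfl fun i hi => ?_
      rw [hGstep1 i (mem_range.1 hi)]; ring
    have hB : ∑ i ∈ Ico k n, L i * (G (i+1) - G i) = (S - (k : ℝ) * M) * L k := by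
      rcases eq_or_lt_of_le hkn with h | h
      · have hSkM : S = (k : ℝ) * M := le_antisymm (by rw [h]; exact hSnM) hkM
        rw [show Ico k n = ∅ by rw [h]; exact Finset.Ico_self n, Finset.sum_empty, hSkM]
        ring
      · rw [Finset.sum_eq_single_of_mem k (Finset.mem_Ico.2 ⟨le_refl k, h⟩)]
        · rw [hGstepk]; ring
        · intro b hb hbk
          have : k < b := by
            rcases Finset.mem_Ico.1 hb with ⟨h1, _⟩
            omega
          rw [hGstep0 b this, mul_zero]
    rw [hA, hB]
  -- identify the filter sum
  have hfilter : (∑ i ∈ Finset.univ.filter (fun i : Fin n => (i : ℕ) < k), l i)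
      = ∑ i ∈ range k, L i := by
    have h1 : (∑ i ∈ Finset.univ.filter (fun i : Fin n => (i : ℕ) < k), l i)
        = ∑ i : Fin n, (if (i : ℕ) < k then L (i : ℕ) else 0) := by
      rw [Finset.sum_filter]
      exact Finset.sum_congr rfl fun i _ => by rw [hLeq]
    rw [h1, Fin.sum_univ_eq_sum_range (fun i => if i < k then L i else 0) n]
    rw [← Finset.sum_subset (Finset.range_subset_range.2 hkn)
      (fun x _ hx => if_neg (by simp at hx ⊢; omega))]
    exact Finset.sum_congr rfl fun i hi => if_pos (mem_range.1 hi)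
  -- total sum identification
  have htot : ∑ i, l i * w i = ∑ i ∈ range n, L i * W i := by
    rw [← Fin.sum_univ_eq_sum_range (fun i => L i * W i) n]
    refine Finset.sum_congr rfl fun i _ => ?_
    rw [hLeq, hWdef]
    simp only [dif_pos i.isLt]
  -- L k nonneg given nonneg partial sum
  have hLk : 0 ≤ ∑ i ∈ range k, L i → 0 ≤ L k := by
    intro hT
    by_contra h
    push_neg at h
    have : ∑ i ∈ range k, L i ≤ ∑ i ∈ range k, L k :=
      Finset.sum_le_sum fun i hi => hLmono (le_of_lt (mem_range.1 hi))
    simp only [Finset.sum_const, Finset.card_range, nsmul_eq_mul] at this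
    have hkpos : (0:ℝ) < (k : ℝ) := by exact_mod_cast hk1
    nlinarith
  have hrem : 0 ≤ S - (k : ℝ) * M := sub_nonneg.2 hkM
  constructor
  · intro hpos'
    rw [hfilter] at hpos'
    rw [htot]
    calc (0:ℝ) < M * (∑ i ∈ range k, L i) + (S - (k : ℝ) * M) * L k := by
          have h1 : 0 < M * (∑ i ∈ range k, L i) := mul_pos hpos hpos'
          have h2 : 0 ≤ (S - (k : ℝ) * M) * L k := mul_nonneg hrem (hLk hpos'.le)
          linarith
    _ = ∑ i ∈ range n, L i * (G (i+1) - G i) := hideal.symm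
    _ ≤ ∑ i ∈ range n, L i * W i := hcomp
  · intro hnn
    rw [hfilter] at hnn
    rw [htot]
    calc (0:ℝ) ≤ M * (∑ i ∈ range k, L i) + (S - (k : ℝ) * M) * L k := by
          have h1 : 0 ≤ M * (∑ i ∈ range k, L i) := mul_nonneg hpos.le hnn
          have h2 : 0 ≤ (S - (k : ℝ) * M) * L k := mul_nonneg hrem (hLk hnn)
          linarith
    _ = ∑ i ∈ range n, L i * (G (i+1) - G i) := hideal.symm
    _ ≤ ∑ i ∈ range n, L i * W i := hcomp
end

section
/- For double forms ω₁, ω₂, ω₃ on a Euclidean space, the composition product satisfies the adjointness relations ⟨ω₁∘ω₂, ω₃⟩ = ⟨ω₂, ω₁ᵗ∘ω₃⟩ = ⟨ω₁, ω₃∘ω₂ᵗ⟩, where ωᵗ denotes the transpose of a double form. -/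
noncomputable section

open Finset
open scoped RealInnerProductSpace

/-- Euclidean `n`-space. -/
abbrev Evec (n : ℕ) := EuclideanSpace ℝ (Fin n)

/-- The space of `(p,q)` double forms, modeled as real-valued kernels on pairs of tuples. -/
abbrev DF (n p q : ℕ) := (Fin p → Evec n) → (Fin q → Evec n) → ℝ

/-- `p`-forms. -/
abbrev Form (n p : ℕ) := (Fin p → Evec n) → ℝ

/-- Mixed-degree forms (elements of the full exterior algebra). -/
abbrev MixedForm (n : ℕ) := ∀ p, Form n p

/-- Mixed-bidegree double forms. -/
abbrev MixedDF (n : ℕ) := ∀ p q, DF n p q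

/-- The standard orthonormal basis. -/
def ebasis (n : ℕ) (i : Fin n) : Evec n := EuclideanSpace.single i 1

/-- The metric as a `(1,1)` double form. -/
def gdf (n : ℕ) : DF n 1 1 := fun x y => ⟪x 0, y 0⟫

/-- Alternating multilinear predicate for a `p`-form kernel. -/
def IsAltML {n m : ℕ} (f : Form n m) : Prop :=
  (∀ (x : Fin m → Evec n) (i : Fin m) (c : ℝ) (a b : Evec n),
      f (Function.update x i (c • a + b)) =
        c * f (Function.update x i a) + f (Function.update x i b)) ∧
  (∀ (x : Fin m → Evec n) (i j : Fin m), i ≠ j → x i = x j → f x = 0)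

/-- A kernel is a genuine double form iff it is alternating multilinear in both blocks. -/
def IsDF {n p q : ℕ} (ω : DF n p q) : Prop :=
  (∀ y, IsAltML (n := n) fun x => ω x y) ∧ (∀ x, IsAltML (ω x))

/-- Bilinearity of a function of two vectors. -/
def IsBilin {n : ℕ} (h : Evec n → Evec n → ℝ) : Prop :=
  (∀ y, IsLinearMap ℝ fun x => h x y) ∧ (∀ x, IsLinearMap ℝ (h x))

/-- A 2-form: an alternating bilinear function. -/
def IsAltBilin {n : ℕ} (h : Evec n → Evec n → ℝ) : Prop :=
  IsBilin h ∧ ∀ x, h x x = 0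

/-- Exterior product of double forms. -/
def wedge {n p q r s : ℕ} (ω : DF n p q) (η : DF n r s) : DF n (p + r) (q + s) :=
  fun x y =>
    (((p.factorial * r.factorial * q.factorial * s.factorial : ℕ) : ℝ))⁻¹ *
      ∑ σ : Equiv.Perm (Fin (p + r)), ∑ τ : Equiv.Perm (Fin (q + s)),
        ((Equiv.Perm.sign σ : ℤ) : ℝ) * ((Equiv.Perm.sign τ : ℤ) : ℝ) *
          ω (fun i => x (σ (Fin.castAdd r i))) (fun j => y (τ (Fin.castAdd s j))) *
          η (fun i => x (σ (Fin.natAdd p i))) (fun j => y (τ (Fin.natAdd q j)))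

/-- Exterior powers of the metric: `gᵖ`. -/
def gpow (n : ℕ) : (p : ℕ) → DF n p p
  | 0 => fun _ _ => 1
  | p + 1 => wedge (gpow n p) (gdf n)

/-- The natural inner product of `(p,q)` double forms. -/
def innerDF {n p q : ℕ} (ω η : DF n p q) : ℝ :=
  (((p.factorial * q.factorial : ℕ) : ℝ))⁻¹ *
    ∑ f : Fin p → Fin n, ∑ h : Fin q → Fin n,
      ω (fun i => ebasis n (f i)) (fun j => ebasis n (h j)) *
        η (fun i => ebasis n (f i)) (fun j => ebasis n (h j))

/-- Composition product of double forms: `comp ω₁ ω₂ = ω₁ ∘ ω₂`. -/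
def comp {n p q r : ℕ} (ω₁ : DF n p q) (ω₂ : DF n r p) : DF n r q :=
  fun x y =>
    ((p.factorial : ℝ))⁻¹ *
      ∑ f : Fin p → Fin n,
        ω₂ x (fun i => ebasis n (f i)) * ω₁ (fun i => ebasis n (f i)) y

/-- Transpose of a double form. -/
def transp {n p q : ℕ} (ω : DF n p q) : DF n q p := fun x y => ω y x

/-- Inclusion of bilinear forms as `(1,1)` double forms (the map `ρ`). -/
def rho {n : ℕ} (h : Evec n → Evec n → ℝ) : DF n 1 1 := fun x y => h (x 0) (y 0)

/-- Inner product of 2-forms. -/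
def inner2 {n : ℕ} (α β : Evec n → Evec n → ℝ) : ℝ :=
  (2:ℝ)⁻¹ * ∑ i, ∑ j, α (ebasis n i) (ebasis n j) * β (ebasis n i) (ebasis n j)

/-- The curvature operator of a `(2,2)` double form, acting on 2-forms. -/
def curvOp {n : ℕ} (R : DF n 2 2) (θ : Evec n → Evec n → ℝ) : Evec n → Evec n → ℝ :=
  fun x y => (2:ℝ)⁻¹ * ∑ i, ∑ j,
    θ (ebasis n i) (ebasis n j) * R ![ebasis n i, ebasis n j] ![x, y]

/-- The first Bianchi identity for a `(2,2)` double form. -/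
def FirstBianchi {n : ℕ} (R : DF n 2 2) : Prop :=
  ∀ x y z t : Evec n, R ![x, y] ![z, t] + R ![y, z] ![x, t] + R ![z, x] ![y, t] = 0

/-- The Ricci contraction `c R` of a `(2,2)` double form. -/
def ricci {n : ℕ} (R : DF n 2 2) : DF n 1 1 :=
  fun x y => ∑ i, R ![ebasis n i, x 0] ![ebasis n i, y 0]

/-- Contraction of double forms. -/
def contr {n p q : ℕ} (ω : DF n (p + 1) (q + 1)) : DF n p q :=
  fun x y => ∑ i, ω (Fin.cons (ebasis n i) x) (Fin.cons (ebasis n i) y)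

/-- Iterated contraction `cʳ`. -/
def contrIter {n : ℕ} : (r : ℕ) → {p q : ℕ} → DF n (p + r) (q + r) → DF n p q
  | 0, _, _, ω => ω
  | r + 1, _, _, ω => contrIter r (contr ω)

/-- The `(1,1)` double form associated to an endomorphism. -/
def hdf {n : ℕ} (h : Evec n →ₗ[ℝ] Evec n) : DF n 1 1 := fun x y => ⟪h (x 0), y 0⟫

/-- Left exterior multiplication of a form by a covector `f`. -/
def wedgeC {n p : ℕ} (f : Evec n → ℝ) (α : Form n p) : Form n (p + 1) :=
  fun x => ∑ i : Fin (p + 1), (-1 : ℝ) ^ (i : ℕ) * f (x i) * α (x ∘ i.succAbove)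

/-- Interior product of a form by a vector. -/
def iotaV {n : ℕ} : {p : ℕ} → Evec n → Form n p → Form n (p - 1)
  | 0, _, _ => 0
  | _ + 1, v, α => fun x => α (Fin.cons v x)


/-- Interior product (non-truncating version). -/
def iotaV' {n p : ℕ} (v : Evec n) (α : Form n (p + 1)) : Form n p :=
  fun x => α (Fin.cons v x)

/-- Interior product in the first block (non-truncating version). -/
def iotaL' {n p q : ℕ} (v : Evec n) (ω : DF n (p + 1) q) : DF n p q :=
  fun x y => ω (Fin.cons v x) y

/-- Interior product in the second block (non-truncating version). -/
def iotaR' {n p q : ℕ} (v : Evec n) (ω : DF n p (q + 1)) : DF n p q :=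
  fun x y => ω x (Fin.cons v y)

/-- Embedding a homogeneous form into mixed forms. -/
def embF {n : ℕ} (p : ℕ) (α : Form n p) : MixedForm n :=
  fun d => if h : d = p then cast (show Form n p = Form n d by rw [h]) α else 0

/-- Left Clifford multiplication `v · α` of a homogeneous form. -/
def cliffLone {n p : ℕ} (v : Evec n) (α : Form n p) : MixedForm n :=
  embF (p + 1) (wedgeC (fun u => ⟪v, u⟫) α) - embF (p - 1) (iotaV v α)

/-- Right Clifford multiplication `α · v` of a homogeneous form. -/
def cliffRone {n p : ℕ} (v : Evec n) (α : Form n p) : MixedForm n :=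
  (-1 : ℝ) ^ p • (embF (p + 1) (wedgeC (fun u => ⟪v, u⟫) α) + embF (p - 1) (iotaV v α))

/-- Left Clifford multiplication by a vector on mixed forms. -/
def cliffLv {n : ℕ} (v : Evec n) (ω : MixedForm n) : MixedForm n :=
  fun d => match d with
  | 0 => -(iotaV' v (ω 1))
  | d + 1 => wedgeC (fun u => ⟪v, u⟫) (ω d) - iotaV' v (ω (d + 1 + 1))

/-- Right Clifford multiplication by a vector on mixed forms. -/
def cliffRv {n : ℕ} (v : Evec n) (ω : MixedForm n) : MixedForm n :=
  fun d => match d with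
  | 0 => -(iotaV' v (ω 1))
  | d + 1 => (-1 : ℝ) ^ d • (wedgeC (fun u => ⟪v, u⟫) (ω d) + iotaV' v (ω (d + 1 + 1)))

/-- Left Clifford multiplication by a 2-form on mixed forms. -/
def cliffL2 {n : ℕ} (α : Evec n → Evec n → ℝ) (ω : MixedForm n) : MixedForm n :=
  (2:ℝ)⁻¹ • ∑ i, ∑ j, α (ebasis n i) (ebasis n j) • cliffLv (ebasis n i) (cliffLv (ebasis n j) ω)

/-- Right Clifford multiplication by a 2-form on mixed forms. -/
def cliffR2 {n : ℕ} (α : Evec n → Evec n → ℝ) (ω : MixedForm n) : MixedForm n :=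
  (2:ℝ)⁻¹ • ∑ i, ∑ j, α (ebasis n i) (ebasis n j) • cliffRv (ebasis n j) (cliffRv (ebasis n i) ω)

/-- Interior product by a vector in the first block of a double form. -/
def iotaL {n : ℕ} : {p q : ℕ} → Evec n → DF n p q → DF n (p - 1) q
  | 0, _, _, _ => 0
  | _ + 1, _, v, ω => fun x y => ω (Fin.cons v x) y

/-- Interior product by a vector in the second block of a double form. -/
def iotaR {n : ℕ} : {p q : ℕ} → Evec n → DF n p q → DF n p (q - 1)
  | _, 0, _, _ => 0
  | _, _ + 1, v, ω => fun x y => ω x (Fin.cons v y)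

/-- Exterior multiplication by a covector in the first block. -/
def wedgeCL {n p q : ℕ} (f : Evec n → ℝ) (ω : DF n p q) : DF n (p + 1) q :=
  fun x y => ∑ i : Fin (p + 1), (-1 : ℝ) ^ (i : ℕ) * f (x i) * ω (x ∘ i.succAbove) y

/-- Exterior multiplication by a covector in the second block. -/
def wedgeCR {n p q : ℕ} (f : Evec n → ℝ) (ω : DF n p q) : DF n p (q + 1) :=
  fun x y => ∑ j : Fin (q + 1), (-1 : ℝ) ^ (j : ℕ) * f (y j) * ω x (y ∘ j.succAbove)

/-- Left Clifford multiplication by a vector on the first factor of mixed double forms. -/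
def cliffLvL {n : ℕ} (v : Evec n) (Ω : MixedDF n) : MixedDF n :=
  fun p q => match p with
  | 0 => -(iotaL' v (Ω 1 q))
  | p + 1 => wedgeCL (fun u => ⟪v, u⟫) (Ω p q) - iotaL' v (Ω (p + 1 + 1) q)

/-- Right Clifford multiplication by a vector on the first factor of mixed double forms. -/
def cliffRvL {n : ℕ} (v : Evec n) (Ω : MixedDF n) : MixedDF n :=
  fun p q => match p with
  | 0 => -(iotaL' v (Ω 1 q))
  | p + 1 => (-1 : ℝ) ^ p • (wedgeCL (fun u => ⟪v, u⟫) (Ω p q) + iotaL' v (Ω (p + 1 + 1) q))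

/-- Left Clifford multiplication by a vector on the second factor of mixed double forms. -/
def cliffLvR {n : ℕ} (v : Evec n) (Ω : MixedDF n) : MixedDF n :=
  fun p q => match q with
  | 0 => -(iotaR' v (Ω p 1))
  | q + 1 => wedgeCR (fun u => ⟪v, u⟫) (Ω p q) - iotaR' v (Ω p (q + 1 + 1))

/-- Right Clifford multiplication by a vector on the second factor of mixed double forms. -/
def cliffRvR {n : ℕ} (v : Evec n) (Ω : MixedDF n) : MixedDF n :=
  fun p q => match q with
  | 0 => -(iotaR' v (Ω p 1))
  | q + 1 => (-1 : ℝ) ^ q • (wedgeCR (fun u => ⟪v, u⟫) (Ω p q) + iotaR' v (Ω p (q + 1 + 1)))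

/-- Clifford commutator with a covector (1-form) on the first factor. -/
def adLone {n : ℕ} (v : Evec n) (Ω : MixedDF n) : MixedDF n :=
  cliffLvL v Ω - cliffRvL v Ω

/-- Clifford commutator with a covector (1-form) on the second factor. -/
def adRone {n : ℕ} (v : Evec n) (Ω : MixedDF n) : MixedDF n :=
  cliffLvR v Ω - cliffRvR v Ω

/-- The sharp product of a `(1,1)` double form with a mixed double form. -/
def sharp11 {n : ℕ} (h : Evec n → Evec n → ℝ) (Ω : MixedDF n) : MixedDF n :=
  ∑ i, ∑ j, h (ebasis n i) (ebasis n j) • adLone (ebasis n i) (adRone (ebasis n j) Ω)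

/-- Clifford commutator with the 2-form `v ∧ w` (for orthonormal `v, w`) on the first factor. -/
def adLpair {n : ℕ} (v w : Evec n) (Ω : MixedDF n) : MixedDF n :=
  cliffLvL v (cliffLvL w Ω) - cliffRvL w (cliffRvL v Ω)

/-- Clifford commutator with the 2-form `v ∧ w` (for orthonormal `v, w`) on the second factor. -/
def adRpair {n : ℕ} (v w : Evec n) (Ω : MixedDF n) : MixedDF n :=
  cliffLvR v (cliffLvR w Ω) - cliffRvR w (cliffRvR v Ω)

/-- Clifford commutator with a 2-form on the first factor. -/
def adL2 {n : ℕ} (α : Evec n → Evec n → ℝ) (Ω : MixedDF n) : MixedDF n :=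
  (2:ℝ)⁻¹ • ∑ i, ∑ j, α (ebasis n i) (ebasis n j) • adLpair (ebasis n i) (ebasis n j) Ω

/-- Clifford commutator with a 2-form on the second factor. -/
def adR2 {n : ℕ} (α : Evec n → Evec n → ℝ) (Ω : MixedDF n) : MixedDF n :=
  (2:ℝ)⁻¹ • ∑ i, ∑ j, α (ebasis n i) (ebasis n j) • adRpair (ebasis n i) (ebasis n j) Ω

/-- The sharp product of a `(2,2)` double form with a mixed double form. -/
def sharpR {n : ℕ} (R : DF n 2 2) (Ω : MixedDF n) : MixedDF n :=
  (4:ℝ)⁻¹ • ∑ i, ∑ j, ∑ k, ∑ l,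
    R ![ebasis n i, ebasis n j] ![ebasis n k, ebasis n l] •
      adLpair (ebasis n i) (ebasis n j) (adRpair (ebasis n k) (ebasis n l) Ω)

/-- Embedding of a homogeneous double form into mixed double forms. -/
def embDF {n : ℕ} (p q : ℕ) (ω : DF n p q) : MixedDF n :=
  fun p' q' =>
    if h : p' = p ∧ q' = q then cast (show DF n p q = DF n p' q' by rw [h.1, h.2]) ω else 0

/-- Interior product of a double form by a `(1,1)` double form. -/
def iotaH {n : ℕ} : {p q : ℕ} → (Evec n → Evec n → ℝ) → DF n p q → DF n (p - 1) (q - 1)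
  | 0, _, _, _ => 0
  | _ + 1, 0, _, _ => 0
  | _ + 1, _ + 1, h, ω => fun x y =>
      ∑ i, ∑ j, h (ebasis n i) (ebasis n j) *
        ω (Fin.cons (ebasis n i) x) (Fin.cons (ebasis n j) y)

/-- Contraction of a double form, defined in every bidegree. -/
def contrAny {n : ℕ} : {p q : ℕ} → DF n p q → DF n (p - 1) (q - 1)
  | 0, _, _ => 0
  | _ + 1, 0, _ => 0
  | _ + 1, _ + 1, ω => fun x y =>
      ∑ i, ω (Fin.cons (ebasis n i) x) (Fin.cons (ebasis n i) y)

/-- The first Bianchi sum `𝔖`. -/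
def bianchiT {n : ℕ} : {p q : ℕ} → DF n p q → DF n (p + 1) (q - 1)
  | _, 0, _ => 0
  | p, _ + 1, ω => fun x y =>
      ∑ i, ∑ a : Fin (p + 1), (-1 : ℝ) ^ (a : ℕ) * ⟪ebasis n i, x a⟫ *
        ω (x ∘ a.succAbove) (Fin.cons (ebasis n i) y)

/-- The adjoint first Bianchi sum `𝔖̃`. -/
def bianchiAdjT {n : ℕ} : {p q : ℕ} → DF n p q → DF n (p - 1) (q + 1)
  | 0, _, _ => 0
  | _ + 1, q, ω => fun x y =>
      ∑ i, ∑ b : Fin (q + 1), (-1 : ℝ) ^ (b : ℕ) * ⟪ebasis n i, y b⟫ *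
        ω (Fin.cons (ebasis n i) x) (y ∘ b.succAbove)

/-- `g^{q-1} ρ(α) / (q-1)!`, the derivation extension of a `(1,1)` double form, with the
convention that it vanishes for `q = 0` (i.e. `g⁻¹ = 0`). -/
def gPowRho {n : ℕ} : (q : ℕ) → (Evec n → Evec n → ℝ) → DF n q q
  | 0, _ => 0
  | q + 1, α => ((q.factorial : ℝ))⁻¹ • wedge (gpow n q) (rho α)

/-- A 2-form is expressible in terms of `m` covectors. -/
def ExprBy {n : ℕ} (E : Evec n → Evec n → ℝ) (m : ℕ) : Prop :=
  ∃ (w : Fin m → Evec n) (c : Fin m → Fin m → ℝ), ∀ x y,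
    E x y = ∑ a, ∑ b, c a b * (⟪w a, x⟫ * ⟪w b, y⟫ - ⟪w a, y⟫ * ⟪w b, x⟫)

/-- `⟨ω₁∘ω₂, ω₃⟩ = ⟨ω₂, ω₁ᵗ∘ω₃⟩ = ⟨ω₁, ω₃∘ω₂ᵗ⟩`. -/
theorem statement4 (n p q r : ℕ) (ω₁ : DF n p q) (ω₂ : DF n r p) (ω₃ : DF n r q) :
    innerDF (comp ω₁ ω₂) ω₃ = innerDF ω₂ (comp (transp ω₁) ω₃) ∧
    innerDF (comp ω₁ ω₂) ω₃ = innerDF ω₁ (comp ω₃ (transp ω₂)) := by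
  constructor
  · simp only [innerDF, comp, transp, Finset.sum_mul, Finset.mul_sum]
    push_cast
    ring_nf
    refine Finset.sum_congr rfl fun f _ => ?_
    rw [Finset.sum_comm]
    exact Finset.sum_congr rfl fun k _ => Finset.sum_congr rfl fun h _ => by ring
  · simp only [innerDF, comp, transp, Finset.sum_mul, Finset.mul_sum]
    push_cast
    ring_nf
    rw [Finset.sum_congr rfl fun f _ => Finset.sum_comm]
    rw [Finset.sum_comm]
    refine Finset.sum_congr rfl fun k _ => ?_
    rw [Finset.sum_comm]
    exact Finset.sum_congr rfl fun h _ => Finset.sum_congr rfl fun f _ => by ring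
end
end

section
/- Let R be a symmetric (2,2) double form on a Euclidean n-space satisfying the first Bianchi identity, and (E_α) an orthonormal basis of Λ²V*. Then Σ_α ρ(R(E_α)) ∘ ρ(E_α) = −c R, where c R is the Ricci contraction of R, ρ is the inclusion Λ²V* → V*⊗V* with ρ(eⁱ∧eʲ) = eⁱ⊗eʲ − eʲ⊗eⁱ, and ∘ is the composition product of double forms. -/
noncomputable section

open Finset
open scoped RealInnerProductSpace

section AuxS6

variable {n : ℕ}

lemma ebasis_apply' (i j : Fin n) : ebasis n i j = if i = j then 1 else 0 := by
  simp [ebasis, EuclideanSpace.single_apply, eq_comm]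

lemma inner_ebasis_left' (i : Fin n) (v : Evec n) : ⟪ebasis n i, v⟫ = v i := by
  simp [ebasis, EuclideanSpace.inner_single_left]

lemma inner_ebasis_right' (i : Fin n) (v : Evec n) : ⟪v, ebasis n i⟫ = v i := by
  rw [real_inner_comm]; exact inner_ebasis_left' i v

lemma vec_expand' (v : Evec n) : v = ∑ i, v i • ebasis n i := by
  ext j
  rw [WithLp.ofLp_sum, Finset.sum_apply]
  simp [ebasis_apply', mul_ite]

lemma update_pair0 (a b c : Evec n) : Function.update ![a, b] 0 c = ![c, b] := by
  funext i; fin_cases i <;> simp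

lemma update_pair1 (a b c : Evec n) : Function.update ![a, b] 1 c = ![a, c] := by
  funext i; fin_cases i <;> simp

lemma R_lin0 {R : DF n 2 2} (hR : IsDF R) (b : Evec n) (Y : Fin 2 → Evec n) :
    IsLinearMap ℝ fun a => R ![a, b] Y := by
  have H := (hR.1 Y).1
  have h0 : R ![(0 : Evec n), b] Y = 0 := by
    have h := H ![0, b] 0 1 0 0
    simp [update_pair0] at h
    linarith
  constructor
  · intro a a'
    have h := H ![a, b] 0 1 a a'
    simpa [update_pair0] using h
  · intro c a
    have h := H ![a, b] 0 c a 0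
    simpa [update_pair0, h0, smul_eq_mul] using h

lemma R_lin1 {R : DF n 2 2} (hR : IsDF R) (a : Evec n) (Y : Fin 2 → Evec n) :
    IsLinearMap ℝ fun b => R ![a, b] Y := by
  have H := (hR.1 Y).1
  have h0 : R ![a, (0 : Evec n)] Y = 0 := by
    have h := H ![a, 0] 1 1 0 0
    simp [update_pair1] at h
    linarith
  constructor
  · intro b b'
    have h := H ![a, b] 1 1 b b'
    simpa [update_pair1] using h
  · intro c b
    have h := H ![a, b] 1 c b 0
    simpa [update_pair1, h0, smul_eq_mul] using h

lemma R_swap0 {R : DF n 2 2} (hR : IsDF R) (a b : Evec n) (Y : Fin 2 → Evec n) :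
    R ![a, b] Y = -R ![b, a] Y := by
  have Halt := (hR.1 Y).2
  have haa : ∀ c : Evec n, R ![c, c] Y = 0 := by
    intro c
    exact Halt ![c, c] 0 1 (by decide) rfl
  have h1 : R ![a + b, a + b] Y = 0 := haa _
  have h2 : R ![a + b, a + b] Y =
      R ![a, a] Y + R ![a, b] Y + R ![b, a] Y + R ![b, b] Y := by
    rw [(R_lin0 hR (a + b) Y).map_add, (R_lin1 hR a Y).map_add, (R_lin1 hR b Y).map_add]
    ring
  rw [haa a, haa b] at h2
  linarith [h1.symm.trans h2]

lemma E_antisym {E : Evec n → Evec n → ℝ} (hE : IsAltBilin E) (u v : Evec n) :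
    E u v = -E v u := by
  have h1 : E (u + v) (u + v) = 0 := hE.2 _
  have h2 : E (u + v) (u + v) = E u u + E u v + E v u + E v v := by
    rw [(hE.1.1 (u + v)).map_add, (hE.1.2 u).map_add, (hE.1.2 v).map_add]
    ring
  rw [hE.2 u, hE.2 v] at h2
  linarith [h1.symm.trans h2]

lemma R_expand0 {R : DF n 2 2} (hR : IsDF R) (v b : Evec n) (Y : Fin 2 → Evec n) :
    R ![v, b] Y = ∑ i, v i * R ![ebasis n i, b] Y := by
  have L := R_lin0 hR b Y
  conv_lhs => rw [vec_expand' v]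
  have h := map_sum (IsLinearMap.mk' _ L) (fun i => v i • ebasis n i) Finset.univ
  simp only [IsLinearMap.mk'_apply, L.map_smul, smul_eq_mul] at h
  exact h

lemma R_expand1 {R : DF n 2 2} (hR : IsDF R) (a v : Evec n) (Y : Fin 2 → Evec n) :
    R ![a, v] Y = ∑ i, v i * R ![a, ebasis n i] Y := by
  have L := R_lin1 hR a Y
  conv_lhs => rw [vec_expand' v]
  have h := map_sum (IsLinearMap.mk' _ L) (fun i => v i • ebasis n i) Finset.univ
  simp only [IsLinearMap.mk'_apply, L.map_smul, smul_eq_mul] at h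
  exact h

lemma E_expand0 {E : Evec n → Evec n → ℝ} (hE : IsAltBilin E) (v b : Evec n) :
    E v b = ∑ i, v i * E (ebasis n i) b := by
  have L := hE.1.1 b
  conv_lhs => rw [vec_expand' v]
  have h := map_sum (IsLinearMap.mk' _ L) (fun i => v i • ebasis n i) Finset.univ
  simp only [IsLinearMap.mk'_apply, L.map_smul, smul_eq_mul] at h
  exact h

lemma E_expand1 {E : Evec n → Evec n → ℝ} (hE : IsAltBilin E) (a v : Evec n) :
    E a v = ∑ i, v i * E a (ebasis n i) := by
  have L := hE.1.2 a
  conv_lhs => rw [vec_expand' v]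
  have h := map_sum (IsLinearMap.mk' _ L) (fun i => v i • ebasis n i) Finset.univ
  simp only [IsLinearMap.mk'_apply, L.map_smul, smul_eq_mul] at h
  exact h

end AuxS6

/-- For a symmetric `(2,2)` double form `R` satisfying the first Bianchi
identity, and any orthonormal basis `(E_α)` of `Λ²V*`:
`∑_α ρ(R(E_α)) ∘ ρ(E_α) = − c R`. -/
theorem statement6 (n : ℕ) (R : DF n 2 2) (hR : IsDF R) (hsym : transp R = R)
    (hbianchi : FirstBianchi R)
    (E : Fin (n * (n - 1) / 2) → (Evec n → Evec n → ℝ))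
    (hE : ∀ α, IsAltBilin (E α))
    (hON : ∀ α β, inner2 (E α) (E β) = if α = β then 1 else 0)
    (hCompl : ∀ θ : Evec n → Evec n → ℝ, IsAltBilin θ →
      ∀ x y, θ x y = ∑ α, inner2 θ (E α) * E α x y) :
    (∑ α, comp (rho (curvOp R (E α))) (rho (E α))) = -(ricci R) := by
  funext x y
  have hfin : ∀ F : Fin n → ℝ, ∑ f : Fin 1 → Fin n, F (f 0) = ∑ k, F k := fun F =>
    Fintype.sum_equiv (Equiv.funUnique (Fin 1) (Fin n)) _ F (fun f => rfl)
  -- completeness identity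
  have key : ∀ k i j : Fin n,
      (∑ α, E α (x 0) (ebasis n k) * E α (ebasis n i) (ebasis n j))
        = (if j = k then x 0 i else 0) - (if i = k then x 0 j else 0) := by
    intro k i j
    set θ : Evec n → Evec n → ℝ := fun u w =>
      ⟪x 0, u⟫ * ⟪ebasis n k, w⟫ - ⟪x 0, w⟫ * ⟪ebasis n k, u⟫ with hθdef
    have hθbilin : IsAltBilin θ := by
      refine ⟨⟨fun w => ⟨fun u u' => by simp only [hθdef, inner_add_right]; ring,
          fun c u => by simp only [hθdef, real_inner_smul_right, smul_eq_mul]; ring⟩,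
        fun u => ⟨fun w w' => by simp only [hθdef, inner_add_right]; ring,
          fun c w => by simp only [hθdef, real_inner_smul_right, smul_eq_mul]; ring⟩⟩,
        fun u => by simp only [hθdef]; ring⟩
    have hθval : ∀ i' j' : Fin n, θ (ebasis n i') (ebasis n j')
        = (if j' = k then x 0 i' else 0) - (if i' = k then x 0 j' else 0) := by
      intro i' j'
      simp only [θ, inner_ebasis_right', inner_ebasis_left', ebasis_apply']
      by_cases h1 : j' = k <;> by_cases h2 : i' = k <;> simp [h1, h2]
    have hinner : ∀ α, inner2 θ (E α) = E α (x 0) (ebasis n k) := by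
      intro α
      have hsum : ∑ i', ∑ j', θ (ebasis n i') (ebasis n j') * E α (ebasis n i') (ebasis n j')
          = 2 * E α (x 0) (ebasis n k) := by
        have step1 : ∑ i', ∑ j', θ (ebasis n i') (ebasis n j') * E α (ebasis n i') (ebasis n j')
            = ∑ i', ∑ j',
              ((if j' = k then x 0 i' * E α (ebasis n i') (ebasis n j') else 0)
                - (if i' = k then x 0 j' * E α (ebasis n i') (ebasis n j') else 0)) := by
          refine Finset.sum_congr rfl fun i' _ => Finset.sum_congr rfl fun j' _ => ?_
          rw [hθval]
          by_cases h1 : j' = k <;> by_cases h2 : i' = k <;> simp [h1, h2, sub_mul]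
        rw [step1]
        simp only [Finset.sum_sub_distrib, Finset.sum_ite_irrel, Finset.sum_const_zero,
          Finset.sum_ite_eq', Finset.mem_univ, if_true]
        rw [← E_expand0 (hE α), ← E_expand1 (hE α),
          E_antisym (hE α) (ebasis n k) (x 0)]
        ring
      rw [inner2, hsum]
      ring
    calc (∑ α, E α (x 0) (ebasis n k) * E α (ebasis n i) (ebasis n j))
        = ∑ α, inner2 θ (E α) * E α (ebasis n i) (ebasis n j) :=
          Finset.sum_congr rfl fun α _ => by rw [hinner α]
      _ = θ (ebasis n i) (ebasis n j) := (hCompl θ hθbilin _ _).symm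
      _ = _ := hθval i j
  -- the per-k computation
  have mainstep : ∀ k : Fin n,
      (∑ α, E α (x 0) (ebasis n k) * ((2:ℝ)⁻¹ * ∑ i, ∑ j,
          E α (ebasis n i) (ebasis n j) * R ![ebasis n i, ebasis n j] ![ebasis n k, y 0]))
        = -R ![ebasis n k, x 0] ![ebasis n k, y 0] := by
    intro k
    calc (∑ α, E α (x 0) (ebasis n k) * ((2:ℝ)⁻¹ * ∑ i, ∑ j,
            E α (ebasis n i) (ebasis n j) * R ![ebasis n i, ebasis n j] ![ebasis n k, y 0]))
        = ∑ α, ∑ i, ∑ j, (2:ℝ)⁻¹ *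
            (E α (x 0) (ebasis n k) * E α (ebasis n i) (ebasis n j) *
              R ![ebasis n i, ebasis n j] ![ebasis n k, y 0]) := by
          refine Finset.sum_congr rfl fun α _ => ?_
          simp only [Finset.mul_sum]
          refine Finset.sum_congr rfl fun i _ => Finset.sum_congr rfl fun j _ => by ring
      _ = ∑ i, ∑ j, ∑ α, (2:ℝ)⁻¹ *
            (E α (x 0) (ebasis n k) * E α (ebasis n i) (ebasis n j) *
              R ![ebasis n i, ebasis n j] ![ebasis n k, y 0]) := by
          rw [Finset.sum_comm]
          exact Finset.sum_congr rfl fun i _ => Finset.sum_comm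
      _ = ∑ i, ∑ j, (2:ℝ)⁻¹ *
            ((∑ α, E α (x 0) (ebasis n k) * E α (ebasis n i) (ebasis n j)) *
              R ![ebasis n i, ebasis n j] ![ebasis n k, y 0]) := by
          refine Finset.sum_congr rfl fun i _ => Finset.sum_congr rfl fun j _ => ?_
          rw [← Finset.mul_sum, ← Finset.sum_mul]
      _ = ∑ i, ∑ j, (2:ℝ)⁻¹ *
            (((if j = k then x 0 i else 0) - (if i = k then x 0 j else 0)) *
              R ![ebasis n i, ebasis n j] ![ebasis n k, y 0]) := by
          refine Finset.sum_congr rfl fun i _ => Finset.sum_congr rfl fun j _ => ?_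
          rw [key]
      _ = ∑ i, ((2:ℝ)⁻¹ * (x 0 i * R ![ebasis n i, ebasis n k] ![ebasis n k, y 0])
            - (if i = k then
                (2:ℝ)⁻¹ * ∑ j, x 0 j * R ![ebasis n k, ebasis n j] ![ebasis n k, y 0]
              else 0)) := by
          refine Finset.sum_congr rfl fun i _ => ?_
          by_cases hik : i = k
          · subst hik
            simp only [if_pos rfl]
            calc (∑ j, (2:ℝ)⁻¹ * (((if j = i then x 0 i else 0) - x 0 j) *
                    R ![ebasis n i, ebasis n j] ![ebasis n i, y 0]))
                = ∑ j, ((if j = i then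
                      (2:ℝ)⁻¹ * (x 0 i * R ![ebasis n i, ebasis n j] ![ebasis n i, y 0])
                    else 0)
                    - (2:ℝ)⁻¹ * (x 0 j * R ![ebasis n i, ebasis n j] ![ebasis n i, y 0])) := by
                  refine Finset.sum_congr rfl fun j _ => ?_
                  by_cases h : j = i <;> simp [h] <;> ring
              _ = (∑ j, if j = i then
                      (2:ℝ)⁻¹ * (x 0 i * R ![ebasis n i, ebasis n j] ![ebasis n i, y 0])
                    else 0)
                  - ∑ j, (2:ℝ)⁻¹ *
                      (x 0 j * R ![ebasis n i, ebasis n j] ![ebasis n i, y 0]) :=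
                  Finset.sum_sub_distrib _ _
              _ = (2:ℝ)⁻¹ * (x 0 i * R ![ebasis n i, ebasis n i] ![ebasis n i, y 0])
                  - (2:ℝ)⁻¹ * ∑ j, x 0 j * R ![ebasis n i, ebasis n j] ![ebasis n i, y 0] := by
                  simp only [Finset.sum_ite_eq', Finset.mem_univ, if_true, Finset.mul_sum]
          · simp only [hik, if_false, sub_zero]
            calc (∑ j, (2:ℝ)⁻¹ * ((if j = k then x 0 i else 0) *
                    R ![ebasis n i, ebasis n j] ![ebasis n k, y 0]))
                = ∑ j, (if j = k then
                    (2:ℝ)⁻¹ * (x 0 i * R ![ebasis n i, ebasis n j] ![ebasis n k, y 0])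
                  else 0) := by
                  refine Finset.sum_congr rfl fun j _ => ?_
                  by_cases h : j = k <;> simp [h]
              _ = (2:ℝ)⁻¹ * (x 0 i * R ![ebasis n i, ebasis n k] ![ebasis n k, y 0]) := by
                  simp only [Finset.sum_ite_eq', Finset.mem_univ, if_true]
      _ = (2:ℝ)⁻¹ * ((∑ i, x 0 i * R ![ebasis n i, ebasis n k] ![ebasis n k, y 0])
            - (∑ j, x 0 j * R ![ebasis n k, ebasis n j] ![ebasis n k, y 0])) := by
          rw [Finset.sum_sub_distrib]
          simp only [Finset.sum_ite_eq', Finset.mem_univ, if_true, mul_sub, Finset.mul_sum]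
      _ = -R ![ebasis n k, x 0] ![ebasis n k, y 0] := by
          rw [← R_expand0 hR, ← R_expand1 hR,
            R_swap0 hR (x 0) (ebasis n k) ![ebasis n k, y 0]]
          ring
  -- put everything together
  have lhs_eq : (∑ α, comp (rho (curvOp R (E α))) (rho (E α))) x y
      = ∑ α, ∑ k, E α (x 0) (ebasis n k) * ((2:ℝ)⁻¹ * ∑ i, ∑ j,
          E α (ebasis n i) (ebasis n j) * R ![ebasis n i, ebasis n j] ![ebasis n k, y 0]) := by
    simp only [Finset.sum_apply]
    refine Finset.sum_congr rfl fun α _ => ?_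
    simp only [comp, rho, curvOp, Nat.factorial_one, Nat.cast_one, inv_one, one_mul]
    exact hfin fun k => E α (x 0) (ebasis n k) * ((2:ℝ)⁻¹ * ∑ i, ∑ j,
      E α (ebasis n i) (ebasis n j) * R ![ebasis n i, ebasis n j] ![ebasis n k, y 0])
  rw [lhs_eq, Finset.sum_comm]
  calc (∑ k, ∑ α, E α (x 0) (ebasis n k) * ((2:ℝ)⁻¹ * ∑ i, ∑ j,
          E α (ebasis n i) (ebasis n j) * R ![ebasis n i, ebasis n j] ![ebasis n k, y 0]))
      = ∑ k, -R ![ebasis n k, x 0] ![ebasis n k, y 0] :=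
        Finset.sum_congr rfl fun k _ => mainstep k
    _ = -(ricci R) x y := by
        show _ = -(ricci R x y)
        rw [ricci, ← Finset.sum_neg_distrib]
end
end

section
/- Let R be a symmetric (2,2) double form on a Euclidean n-space satisfying the first Bianchi identity, and (E_α) an orthonormal basis of Λ²V*. Then Σ_α ρ(R(E_α)) · ρ(E_α) = 2R, where · denotes the exterior product of double forms. -/
noncomputable section

open Finset
open scoped RealInnerProductSpace

section Aux

lemma update2_zero {α : Type*} (u v z : α) :
    Function.update ![u, v] (0 : Fin 2) z = ![z, v] := by
  funext i; fin_cases i <;> simp [Function.update]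

lemma update2_one {α : Type*} (u v z : α) :
    Function.update ![u, v] (1 : Fin 2) z = ![u, z] := by
  funext i; fin_cases i <;> simp [Function.update]

lemma altML2 {n : ℕ} {f : Form n 2} (hf : IsAltML f) :
    IsAltBilin (fun u v => f ![u, v]) := by
  obtain ⟨hlin, halt⟩ := hf
  refine ⟨⟨?_, ?_⟩, ?_⟩
  · intro v
    have h0 : f ![(0 : Evec n), v] = 0 := by
      have := hlin ![(0:Evec n), v] 0 1 0 0
      simp [update2_zero] at this
      linarith
    constructor
    · intro u u'
      have := hlin ![u, v] 0 1 u u'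
      simpa [update2_zero] using this
    · intro c u
      have := hlin ![u, v] 0 c u 0
      simpa [update2_zero, h0] using this
  · intro u
    have h0 : f ![u, (0 : Evec n)] = 0 := by
      have := hlin ![u, (0:Evec n)] 1 1 0 0
      simp [update2_one] at this
      linarith
    constructor
    · intro v v'
      have := hlin ![u, v] 1 1 v v'
      simpa [update2_one] using this
    · intro c v
      have := hlin ![u, v] 1 c v 0
      simpa [update2_one, h0] using this
  · intro u
    exact halt ![u, u] 0 1 (by decide) rfl

lemma altBilin_skew {n : ℕ} {h : Evec n → Evec n → ℝ} (hh : IsAltBilin h) (u v : Evec n) :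
    h u v = - h v u := by
  have e1 : h (u + v) (u + v) = 0 := hh.2 _
  have e2 : h (u + v) (u + v) = h u (u+v) + h v (u+v) := (hh.1.1 (u+v)).map_add u v
  have e3 : h u (u+v) = h u u + h u v := (hh.1.2 u).map_add u v
  have e4 : h v (u+v) = h v u + h v v := (hh.1.2 v).map_add u v
  have e5 : h u u = 0 := hh.2 u
  have e6 : h v v = 0 := hh.2 v
  linarith

lemma perm2_sum (f : Equiv.Perm (Fin 2) → ℝ) :
    ∑ σ : Equiv.Perm (Fin 2), f σ = f 1 + f (Equiv.swap 0 1) := by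
  have h : (Finset.univ : Finset (Equiv.Perm (Fin 2))) = {1, Equiv.swap 0 1} := by decide
  rw [h, Finset.sum_pair (by decide)]

lemma wedge_rho_rho {n : ℕ} (h1 h2 : Evec n → Evec n → ℝ) (x y : Fin 2 → Evec n) :
    wedge (rho h1) (rho h2) x y =
      h1 (x 0) (y 0) * h2 (x 1) (y 1) - h1 (x 0) (y 1) * h2 (x 1) (y 0)
        - h1 (x 1) (y 0) * h2 (x 0) (y 1) + h1 (x 1) (y 1) * h2 (x 0) (y 0) := by
  have hc : (Fin.castAdd 1 (0 : Fin 1)) = (0 : Fin 2) := rfl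
  have hn : (Fin.natAdd 1 (0 : Fin 1)) = (1 : Fin 2) := rfl
  unfold wedge rho
  rw [perm2_sum, perm2_sum, perm2_sum]
  simp [hc, hn, Equiv.swap_apply_left, Equiv.swap_apply_right,
    Equiv.Perm.sign_swap (show (0 : Fin 2) ≠ 1 by decide)]
  ring

end Aux
/-- For a symmetric `(2,2)` double form `R` satisfying the first Bianchi
identity, and any orthonormal basis `(E_α)` of `Λ²V*`:
`∑_α ρ(R(E_α)) · ρ(E_α) = 2 R` (exterior product). -/
theorem statement7 (n : ℕ) (R : DF n 2 2) (hR : IsDF R) (hsym : transp R = R)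
    (hbianchi : FirstBianchi R)
    (E : Fin (n * (n - 1) / 2) → (Evec n → Evec n → ℝ))
    (hE : ∀ α, IsAltBilin (E α))
    (hON : ∀ α β, inner2 (E α) (E β) = if α = β then 1 else 0)
    (hCompl : ∀ θ : Evec n → Evec n → ℝ, IsAltBilin θ →
      ∀ x y, θ x y = ∑ α, inner2 θ (E α) * E α x y) :
    (∑ α, wedge (rho (curvOp R (E α))) (rho (E α))) = (2 : ℝ) • R := by
  have hL : ∀ A : Fin 2 → Evec n, IsAltBilin (fun u v => R ![u, v] A) :=
    fun A => altML2 (hR.1 A)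
  have hRt : ∀ A : Fin 2 → Evec n, IsAltBilin (fun u v => R A ![u, v]) :=
    fun A => altML2 (hR.2 A)
  have hsym' : ∀ a b : Fin 2 → Evec n, R a b = R b a := fun a b =>
    (congrFun (congrFun hsym b) a : R a b = R b a)
  have skewL : ∀ (u v : Evec n) (A : Fin 2 → Evec n), R ![u, v] A = - R ![v, u] A :=
    fun u v A => altBilin_skew (hL A) u v
  have skewR : ∀ (A : Fin 2 → Evec n) (u v : Evec n), R A ![u, v] = - R A ![v, u] :=
    fun A u v => altBilin_skew (hRt A) u v
  have key : ∀ a b c d : Evec n,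
      ∑ α, curvOp R (E α) a b * E α c d = R ![c, d] ![a, b] := by
    intro a b c d
    have hθ : IsAltBilin (fun u v => R ![u, v] ![a, b]) := hL ![a, b]
    have h1 : ∀ α, curvOp R (E α) a b = inner2 (fun u v => R ![u, v] ![a, b]) (E α) := by
      intro α
      unfold curvOp inner2
      congr 1
      exact Finset.sum_congr rfl fun i _ => Finset.sum_congr rfl fun j _ => mul_comm _ _
    calc ∑ α, curvOp R (E α) a b * E α c d
        = ∑ α, inner2 (fun u v => R ![u, v] ![a, b]) (E α) * E α c d :=
          Finset.sum_congr rfl fun α _ => by rw [h1]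
      _ = R ![c, d] ![a, b] := (hCompl _ hθ c d).symm
  have alg : ∀ a b c d : Evec n,
      R ![b, d] ![a, c] - R ![b, c] ![a, d] - R ![a, d] ![b, c] + R ![a, c] ![b, d]
        = 2 * R ![a, b] ![c, d] := by
    intro a b c d
    have e1 := hbianchi a c b d
    have e2 := hbianchi a d b c
    have s1 := skewL c b ![a, d]
    have s2 := skewL b a ![c, d]
    have s3 := skewL d b ![a, c]
    have s4 := skewL b a ![d, c]
    have s5 := skewR ![a, b] d c
    have p1 := hsym' ![b, c] ![a, d]
    have p2 := hsym' ![b, d] ![a, c]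
    linarith
  funext x y
  have hx : ![x 0, x 1] = x := by funext i; fin_cases i <;> rfl
  have hy : ![y 0, y 1] = y := by funext i; fin_cases i <;> rfl
  simp only [Finset.sum_apply, Pi.smul_apply, smul_eq_mul]
  calc ∑ α, wedge (rho (curvOp R (E α))) (rho (E α)) x y
      = (∑ α, curvOp R (E α) (x 0) (y 0) * E α (x 1) (y 1))
        - (∑ α, curvOp R (E α) (x 0) (y 1) * E α (x 1) (y 0))
        - (∑ α, curvOp R (E α) (x 1) (y 0) * E α (x 0) (y 1))
        + (∑ α, curvOp R (E α) (x 1) (y 1) * E α (x 0) (y 0)) := by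
        simp only [wedge_rho_rho]
        rw [Finset.sum_add_distrib, Finset.sum_sub_distrib, Finset.sum_sub_distrib]
    _ = R ![x 1, y 1] ![x 0, y 0] - R ![x 1, y 0] ![x 0, y 1]
          - R ![x 0, y 1] ![x 1, y 0] + R ![x 0, y 0] ![x 1, y 1] := by
        rw [key, key, key, key]
    _ = 2 * R x y := by rw [← hx, ← hy]; exact alg (x 0) (x 1) (y 0) (y 1)
end
end

section
/- Let h : V → V be an endomorphism of a Euclidean space, ∧h its extension by derivations to the exterior algebra, and h also denote the associated bilinear form. Then for θ₁, θ₂ ∈ ΛᵖV with p ≥ 1, ⟨∧h(θ₁), θ₂⟩ = (g^{p−1}h/(p−1)!)(θ₁, θ₂), where g^{p−1}h denotes the exterior product of double forms. -/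
noncomputable section

open Finset
open scoped RealInnerProductSpace

namespace Statement10Aux
open Equiv

open Equiv Finset

def sgn {α : Type*} [DecidableEq α] [Fintype α] (σ : Perm α) : ℝ :=
  ((Equiv.Perm.sign σ : ℤ) : ℝ)

lemma sgn_mul {α : Type*} [DecidableEq α] [Fintype α] (σ τ : Perm α) :
    sgn (σ * τ) = sgn σ * sgn τ := by simp [sgn]

lemma sgn_sq {α : Type*} [DecidableEq α] [Fintype α] (σ : Perm α) : sgn σ * sgn σ = 1 := by
  unfold sgn
  rcases Int.units_eq_one_or (Equiv.Perm.sign σ) with h | h <;> simp [h]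

lemma sgn_inv {α : Type*} [DecidableEq α] [Fintype α] (σ : Perm α) : sgn σ⁻¹ = sgn σ := by
  simp [sgn]

def ext1 {p : ℕ} (ρ : Perm (Fin p)) : Perm (Fin (p + 1)) :=
  (finSuccEquivLast.symm.permCongr) ρ.optionCongr

@[simp] lemma ext1_castSucc {p : ℕ} (ρ : Perm (Fin p)) (j : Fin p) :
    ext1 ρ j.castSucc = (ρ j).castSucc := by
  simp [ext1, Equiv.permCongr_apply]

@[simp] lemma ext1_last {p : ℕ} (ρ : Perm (Fin p)) :
    ext1 ρ (Fin.last p) = Fin.last p := by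
  simp [ext1, Equiv.permCongr_apply]

@[simp] lemma sgn_ext1 {p : ℕ} (ρ : Perm (Fin p)) : sgn (ext1 ρ) = sgn ρ := by
  simp [ext1, sgn, Equiv.Perm.sign_permCongr]

lemma sum_perm_last {p : ℕ} (G : Fin (p + 1) → ℝ) :
    ∑ σ : Perm (Fin (p + 1)), G (σ (Fin.last p)) = (p.factorial : ℝ) * ∑ i, G i := by
  have h0 : ∑ σ : Perm (Fin (p + 1)), G (σ (Fin.last p))
      = ∑ σ : Perm (Fin (p + 1)), G (σ 0) := by
    rw [← Equiv.sum_comp (Equiv.mulRight (Equiv.swap (0 : Fin (p + 1)) (Fin.last p)))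
      (fun σ => G (σ (Fin.last p)))]
    apply Finset.sum_congr rfl
    intro σ _
    simp [Equiv.Perm.mul_apply]
  rw [h0, ← Equiv.sum_comp Equiv.Perm.decomposeFin.symm (fun σ => G (σ 0))]
  rw [Fintype.sum_prod_type]
  simp only [Equiv.Perm.decomposeFin_symm_apply_zero, Finset.sum_const, Finset.card_univ,
    Fintype.card_perm, Fintype.card_fin, nsmul_eq_mul]
  rw [← Finset.mul_sum]

lemma prod_comp_erase {p : ℕ} (σ : Perm (Fin (p + 1))) (g : Fin (p + 1) → ℝ) :
    ∏ j : Fin p, g (σ j.castSucc) = ∏ b ∈ Finset.univ.erase (σ (Fin.last p)), g b := by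
  refine Finset.prod_bij (fun j _ => σ j.castSucc) ?_ ?_ ?_ ?_
  · intro j _
    refine Finset.mem_erase.mpr ⟨fun hc => ?_, Finset.mem_univ _⟩
    exact (Fin.castSucc_lt_last j).ne (σ.injective hc)
  · intro a _ b _ hab
    exact Fin.castSucc_injective _ (σ.injective hab)
  · intro b hb
    obtain ⟨hne, -⟩ := Finset.mem_erase.mp hb
    have h2 : σ.symm b ≠ Fin.last p := by
      intro hc
      apply hne
      rw [← hc]
      simp
    obtain ⟨j, hj⟩ := Fin.exists_castSucc_eq.mpr h2
    refine ⟨j, Finset.mem_univ j, ?_⟩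
    show σ j.castSucc = b
    rw [hj]
    simp
  · intros; rfl

/-- The key permutation-sum identity. -/
lemma core {p : ℕ} (C D : Fin (p + 1) → Fin (p + 1) → ℝ) :
    ∑ σ : Perm (Fin (p + 1)), ∑ τ : Perm (Fin (p + 1)),
      sgn σ * sgn τ *
        ((p.factorial : ℝ) *
          ∑ ρ : Perm (Fin p), sgn ρ * ∏ j : Fin p, C (σ j.castSucc) (τ ((ρ j).castSucc)))
        * D (σ (Fin.last p)) (τ (Fin.last p))
    = (p.factorial : ℝ) ^ 3 * ∑ μ : Perm (Fin (p + 1)), sgn μ *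
        ∑ i, D i (μ i) * ∏ b ∈ Finset.univ.erase i, C b (μ b) := by
  have step1 : ∀ σ : Perm (Fin (p + 1)),
      ∑ τ : Perm (Fin (p + 1)),
        sgn σ * sgn τ *
          ((p.factorial : ℝ) *
            ∑ ρ : Perm (Fin p), sgn ρ * ∏ j : Fin p, C (σ j.castSucc) (τ ((ρ j).castSucc)))
          * D (σ (Fin.last p)) (τ (Fin.last p))
      = ∑ ρ : Perm (Fin p), ∑ μ : Perm (Fin (p + 1)),
          (p.factorial : ℝ) * (sgn μ *
            (∏ j : Fin p, C (σ j.castSucc) (μ (σ j.castSucc))) *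
            D (σ (Fin.last p)) (μ (σ (Fin.last p)))) := by
    intro σ
    have h1 : ∀ τ : Perm (Fin (p + 1)),
        sgn σ * sgn τ *
          ((p.factorial : ℝ) *
            ∑ ρ : Perm (Fin p), sgn ρ * ∏ j : Fin p, C (σ j.castSucc) (τ ((ρ j).castSucc)))
          * D (σ (Fin.last p)) (τ (Fin.last p))
        = ∑ ρ : Perm (Fin p), (p.factorial : ℝ) *
            (sgn σ * sgn τ * sgn ρ *
              (∏ j : Fin p, C (σ j.castSucc) (τ ((ρ j).castSucc))) *
              D (σ (Fin.last p)) (τ (Fin.last p))) := by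
      intro τ
      rw [Finset.mul_sum, Finset.mul_sum, Finset.sum_mul]
      exact Finset.sum_congr rfl fun ρ _ => by ring
    rw [Finset.sum_congr rfl fun τ _ => h1 τ, Finset.sum_comm]
    refine Finset.sum_congr rfl fun ρ _ => ?_
    rw [← Equiv.sum_comp (Equiv.mulRight (σ * ext1 ρ⁻¹))
      (fun τ => (p.factorial : ℝ) * (sgn σ * sgn τ * sgn ρ *
        (∏ j : Fin p, C (σ j.castSucc) (τ ((ρ j).castSucc))) *
        D (σ (Fin.last p)) (τ (Fin.last p))))]
    refine Finset.sum_congr rfl fun μ _ => ?_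
    simp only [Equiv.coe_mulRight, Equiv.Perm.mul_apply, ext1_castSucc, ext1_last,
      Equiv.Perm.coe_inv, Equiv.symm_apply_apply]
    have hs : sgn σ * sgn (μ * (σ * ext1 ρ⁻¹)) * sgn ρ = sgn μ := by
      rw [sgn_mul, sgn_mul, sgn_ext1, sgn_inv]
      have h2 : sgn σ * (sgn μ * (sgn σ * sgn ρ)) * sgn ρ
          = (sgn σ * sgn σ) * (sgn ρ * sgn ρ) * sgn μ := by ring
      rw [h2, sgn_sq, sgn_sq, one_mul, one_mul]
    rw [hs]
  calc
    ∑ σ : Perm (Fin (p + 1)), ∑ τ : Perm (Fin (p + 1)),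
      sgn σ * sgn τ *
        ((p.factorial : ℝ) *
          ∑ ρ : Perm (Fin p), sgn ρ * ∏ j : Fin p, C (σ j.castSucc) (τ ((ρ j).castSucc)))
        * D (σ (Fin.last p)) (τ (Fin.last p))
    = ∑ σ : Perm (Fin (p + 1)), ∑ ρ : Perm (Fin p), ∑ μ : Perm (Fin (p + 1)),
        (p.factorial : ℝ) * (sgn μ *
          (∏ j : Fin p, C (σ j.castSucc) (μ (σ j.castSucc))) *
          D (σ (Fin.last p)) (μ (σ (Fin.last p)))) :=
      Finset.sum_congr rfl fun σ _ => step1 σ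
    _ = ∑ σ : Perm (Fin (p + 1)), ∑ μ : Perm (Fin (p + 1)),
        (p.factorial : ℝ) * ((p.factorial : ℝ) * (sgn μ *
          (∏ j : Fin p, C (σ j.castSucc) (μ (σ j.castSucc))) *
          D (σ (Fin.last p)) (μ (σ (Fin.last p))))) := by
        refine Finset.sum_congr rfl fun σ _ => ?_
        rw [Finset.sum_const, Finset.card_univ, Fintype.card_perm, Fintype.card_fin,
          nsmul_eq_mul, Finset.mul_sum]
    _ = ∑ μ : Perm (Fin (p + 1)), ∑ σ : Perm (Fin (p + 1)),
        (p.factorial : ℝ) * ((p.factorial : ℝ) * (sgn μ *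
          (∏ b ∈ Finset.univ.erase (σ (Fin.last p)), C b (μ b)) *
          D (σ (Fin.last p)) (μ (σ (Fin.last p))))) := by
        rw [Finset.sum_comm]
        refine Finset.sum_congr rfl fun μ _ => Finset.sum_congr rfl fun σ _ => ?_
        rw [prod_comp_erase σ (fun b => C b (μ b))]
    _ = ∑ μ : Perm (Fin (p + 1)), (p.factorial : ℝ) * ∑ i : Fin (p + 1),
        (p.factorial : ℝ) * ((p.factorial : ℝ) * (sgn μ *
          (∏ b ∈ Finset.univ.erase i, C b (μ b)) * D i (μ i))) := by
        refine Finset.sum_congr rfl fun μ _ => ?_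
        exact sum_perm_last (fun i => (p.factorial : ℝ) * ((p.factorial : ℝ) * (sgn μ *
          (∏ b ∈ Finset.univ.erase i, C b (μ b)) * D i (μ i))))
    _ = (p.factorial : ℝ) ^ 3 * ∑ μ : Perm (Fin (p + 1)), sgn μ *
        ∑ i, D i (μ i) * ∏ b ∈ Finset.univ.erase i, C b (μ b) := by
        rw [Finset.mul_sum]
        refine Finset.sum_congr rfl fun μ _ => ?_
        rw [Finset.mul_sum, Finset.mul_sum, Finset.mul_sum]
        refine Finset.sum_congr rfl fun i _ => by ring


lemma gpow_eq (n p : ℕ) : ∀ (x y : Fin p → Evec n),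
    gpow n p x y = (p.factorial : ℝ) *
      ∑ μ : Perm (Fin p), sgn μ * ∏ a, ⟪x a, y (μ a)⟫ := by
  induction p with
  | zero =>
    intro x y
    show (1 : ℝ) = _
    simp [sgn]
  | succ p ih =>
    intro x y
    have hp : (p.factorial : ℝ) ≠ 0 := Nat.cast_ne_zero.mpr p.factorial_ne_zero
    have e1 : gpow n (p + 1) x y =
        ((p.factorial * Nat.factorial 1 * p.factorial * Nat.factorial 1 : ℕ) : ℝ)⁻¹ *
          ∑ σ : Perm (Fin (p + 1)), ∑ τ : Perm (Fin (p + 1)),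
            sgn σ * sgn τ *
              gpow n p (fun i => x (σ i.castSucc)) (fun j => y (τ j.castSucc))
              * ⟪x (σ (Fin.last p)), y (τ (Fin.last p))⟫ := rfl
    calc gpow n (p + 1) x y
      = ((p.factorial * Nat.factorial 1 * p.factorial * Nat.factorial 1 : ℕ) : ℝ)⁻¹ *
          ∑ σ : Perm (Fin (p + 1)), ∑ τ : Perm (Fin (p + 1)),
            sgn σ * sgn τ *
              ((p.factorial : ℝ) * ∑ ρ : Perm (Fin p),
                sgn ρ * ∏ j : Fin p, ⟪x (σ j.castSucc), y (τ ((ρ j).castSucc))⟫)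
              * ⟪x (σ (Fin.last p)), y (τ (Fin.last p))⟫ := by
          rw [e1]
          refine congrArg _ (Finset.sum_congr rfl fun σ _ => Finset.sum_congr rfl fun τ _ => ?_)
          rw [ih (fun i => x (σ i.castSucc)) (fun j => y (τ j.castSucc))]
      _ = ((p.factorial * Nat.factorial 1 * p.factorial * Nat.factorial 1 : ℕ) : ℝ)⁻¹ *
          ((p.factorial : ℝ) ^ 3 * ∑ μ : Perm (Fin (p + 1)), sgn μ *
            ∑ i, ⟪x i, y (μ i)⟫ * ∏ b ∈ Finset.univ.erase i, ⟪x b, y (μ b)⟫) := by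
          rw [core (fun a b => ⟪x a, y b⟫) (fun a b => ⟪x a, y b⟫)]
      _ = ((p + 1).factorial : ℝ) *
          ∑ μ : Perm (Fin (p + 1)), sgn μ * ∏ a, ⟪x a, y (μ a)⟫ := by
          have hinner : ∀ μ : Perm (Fin (p + 1)),
              ∑ i, ⟪x i, y (μ i)⟫ * ∏ b ∈ Finset.univ.erase i, ⟪x b, y (μ b)⟫
              = ((p + 1 : ℕ) : ℝ) * ∏ a, ⟪x a, y (μ a)⟫ := by
            intro μ
            have h2 : ∀ i ∈ Finset.univ,
                ⟪x i, y (μ i)⟫ * ∏ b ∈ Finset.univ.erase i, ⟪x b, y (μ b)⟫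
                = ∏ a, ⟪x a, y (μ a)⟫ := fun i _ =>
              Finset.mul_prod_erase Finset.univ (fun b => ⟪x b, y (μ b)⟫) (Finset.mem_univ i)
            rw [Finset.sum_congr rfl h2, Finset.sum_const, Finset.card_univ,
              Fintype.card_fin, nsmul_eq_mul]
          rw [Finset.sum_congr rfl fun μ _ => by rw [hinner μ]]
          rw [Finset.mul_sum, Finset.mul_sum, Finset.mul_sum]
          refine Finset.sum_congr rfl fun μ _ => ?_
          push_cast [Nat.factorial_succ, Nat.factorial_one]
          field_simp
          ring


end Statement10Aux

/-- For an endomorphism `h` of `V` and its derivation extension `∧h` to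
`Λ^{p+1}V`, one has `⟨∧h(θ₁), θ₂⟩ = (gᵖ h / p!)(θ₁, θ₂)` for all `θ₁, θ₂ ∈ Λ^{p+1}V`
(checked on decomposable vectors, the inner product being the Gram determinant). -/
theorem statement10 (n p : ℕ) (h : Evec n →ₗ[ℝ] Evec n) (v w : Fin (p + 1) → Evec n) :
    (∑ i : Fin (p + 1),
        Matrix.det (Matrix.of (fun a b : Fin (p + 1) =>
          (⟪Function.update v i (h (v i)) a, w b⟫)))) =
      ((p.factorial : ℝ))⁻¹ * wedge (gpow n p) (hdf h) v w := by
    open Statement10Aux in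
  have hp : (p.factorial : ℝ) ≠ 0 := Nat.cast_ne_zero.mpr p.factorial_ne_zero
  have eR : ((p.factorial : ℝ))⁻¹ * wedge (gpow n p) (hdf h) v w
      = ∑ μ : Equiv.Perm (Fin (p + 1)), Statement10Aux.sgn μ *
          ∑ i, ⟪h (v i), w (μ i)⟫ * ∏ b ∈ Finset.univ.erase i, ⟪v b, w (μ b)⟫ := by
    have e1 : wedge (gpow n p) (hdf h) v w =
        ((p.factorial * Nat.factorial 1 * p.factorial * Nat.factorial 1 : ℕ) : ℝ)⁻¹ *
          ∑ σ : Equiv.Perm (Fin (p + 1)), ∑ τ : Equiv.Perm (Fin (p + 1)),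
            Statement10Aux.sgn σ * Statement10Aux.sgn τ *
              gpow n p (fun i => v (σ i.castSucc)) (fun j => w (τ j.castSucc))
              * ⟪h (v (σ (Fin.last p))), w (τ (Fin.last p))⟫ := rfl
    have hscal : ∀ S : ℝ, ((p.factorial : ℝ))⁻¹ *
        (((p.factorial * Nat.factorial 1 * p.factorial * Nat.factorial 1 : ℕ) : ℝ)⁻¹ *
          ((p.factorial : ℝ) ^ 3 * S)) = S := by
      intro S
      push_cast [Nat.factorial_one]
      field_simp
    calc ((p.factorial : ℝ))⁻¹ * wedge (gpow n p) (hdf h) v w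
      = ((p.factorial : ℝ))⁻¹ *
          (((p.factorial * Nat.factorial 1 * p.factorial * Nat.factorial 1 : ℕ) : ℝ)⁻¹ *
          ∑ σ : Equiv.Perm (Fin (p + 1)), ∑ τ : Equiv.Perm (Fin (p + 1)),
            Statement10Aux.sgn σ * Statement10Aux.sgn τ *
              ((p.factorial : ℝ) * ∑ ρ : Equiv.Perm (Fin p),
                Statement10Aux.sgn ρ *
                  ∏ j : Fin p, ⟪v (σ j.castSucc), w (τ ((ρ j).castSucc))⟫)
              * ⟪h (v (σ (Fin.last p))), w (τ (Fin.last p))⟫) := by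
          rw [e1]
          refine congrArg _ (congrArg _
            (Finset.sum_congr rfl fun σ _ => Finset.sum_congr rfl fun τ _ => ?_))
          rw [Statement10Aux.gpow_eq n p (fun i => v (σ i.castSucc)) (fun j => w (τ j.castSucc))]
      _ = ((p.factorial : ℝ))⁻¹ *
          (((p.factorial * Nat.factorial 1 * p.factorial * Nat.factorial 1 : ℕ) : ℝ)⁻¹ *
          ((p.factorial : ℝ) ^ 3 * ∑ μ : Equiv.Perm (Fin (p + 1)), Statement10Aux.sgn μ *
            ∑ i, ⟪h (v i), w (μ i)⟫ * ∏ b ∈ Finset.univ.erase i, ⟪v b, w (μ b)⟫)) := by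
          rw [Statement10Aux.core (fun a b => ⟪v a, w b⟫) (fun a b => ⟪h (v a), w b⟫)]
      _ = ∑ μ : Equiv.Perm (Fin (p + 1)), Statement10Aux.sgn μ *
            ∑ i, ⟪h (v i), w (μ i)⟫ * ∏ b ∈ Finset.univ.erase i, ⟪v b, w (μ b)⟫ :=
          hscal _
  have eL : ∀ i : Fin (p + 1),
      Matrix.det (Matrix.of (fun a b : Fin (p + 1) =>
          (⟪Function.update v i (h (v i)) a, w b⟫)))
      = ∑ σ : Equiv.Perm (Fin (p + 1)), Statement10Aux.sgn σ *
          (⟪h (v i), w (σ i)⟫ * ∏ b ∈ Finset.univ.erase i, ⟪v b, w (σ b)⟫) := by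
    intro i
    rw [← Matrix.det_transpose, Matrix.det_apply']
    refine Finset.sum_congr rfl fun σ _ => ?_
    simp only [Matrix.transpose_apply, Matrix.of_apply]
    unfold Statement10Aux.sgn
    congr 1
    rw [← Finset.mul_prod_erase Finset.univ
      (fun a => ⟪Function.update v i (h (v i)) a, w (σ a)⟫) (Finset.mem_univ i)]
    congr 1
    · rw [Function.update_self]
    · refine Finset.prod_congr rfl fun b hb => ?_
      rw [Function.update_of_ne (Finset.mem_erase.mp hb).1]
  rw [Finset.sum_congr rfl (fun i _ => eL i), Finset.sum_comm, eR]
  refine Finset.sum_congr rfl fun σ _ => ?_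
  rw [Finset.mul_sum]
end
end

section
/- Let h be a (1,1) double form on a Euclidean space and ω a (p,p) double form with p even; then h # ω = 4 ι_h ω, where # is the sharp product induced by the Clifford commutator and ι_h is the interior product with h. If p is odd, then h # ω = 4 h·ω (exterior product). -/
noncomputable section

open Finset
open scoped RealInnerProductSpace

namespace Stmt14

variable {n : ℕ}

/-- Build an alternating map from the `IsAltML` predicate. -/
def toAlt {m : ℕ} (f : Form n m) (hf : IsAltML f) : Evec n [⋀^Fin m]→ₗ[ℝ] ℝ where
  toFun := f
  map_update_add' := by
    intro inst X i a b
    obtain rfl := Subsingleton.elim inst (instDecidableEqFin m)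
    have := hf.1 X i 1 a b
    simpa using this
  map_update_smul' := by
    intro inst X i c a
    obtain rfl := Subsingleton.elim inst (instDecidableEqFin m)
    have h0 : f (Function.update X i 0) = 0 := by
      have := hf.1 X i 1 0 0
      simp only [one_smul, add_zero, one_mul] at this
      linarith
    have := hf.1 X i c a 0
    simp only [add_zero] at this
    rw [this, h0, add_zero, smul_eq_mul]
  map_eq_zero_of_eq' := fun X i j hXij hij => hf.2 X i j hij hXij

lemma altml_map_perm {m : ℕ} {f : Form n m} (hf : IsAltML f) (X : Fin m → Evec n)
    (π : Equiv.Perm (Fin m)) :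
    f (fun i => X (π i)) = ((Equiv.Perm.sign π : ℤ) : ℝ) * f X := by
  have := (toAlt f hf).map_perm X π
  exact (by simpa [toAlt, Function.comp, Units.smul_def, zsmul_eq_mul] using this :
    f (X ∘ ⇑π) = ((Equiv.Perm.sign π : ℤ) : ℝ) * f X)

end Stmt14
namespace Stmt14
open Equiv Equiv.Perm

/-- Factor a permutation of `Fin (p+1)` as (image of 0, permutation of the rest). -/
def permFactor (p : ℕ) : Fin (p + 1) × Equiv.Perm (Fin p) ≃ Equiv.Perm (Fin (p + 1)) where
  toFun aπ := aπ.1.cycleRange⁻¹ * Equiv.Perm.decomposeFin.symm (0, aπ.2)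
  invFun σ := (σ 0, (Equiv.Perm.decomposeFin ((σ 0).cycleRange * σ)).2)
  left_inv := by
    rintro ⟨a, π⟩
    have h0 : (a.cycleRange⁻¹ * Equiv.Perm.decomposeFin.symm (0, π)) 0 = a := by
      simp [Equiv.Perm.mul_apply, Equiv.Perm.decomposeFin_symm_apply_zero,
        Equiv.Perm.inv_def, Fin.cycleRange_symm_zero]
    dsimp only
    rw [h0, mul_inv_cancel_left, Equiv.apply_symm_apply]
  right_inv := by
    intro σ
    have hτ0 : (σ 0).cycleRange (σ 0) = 0 := Fin.cycleRange_self _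
    set τ := (σ 0).cycleRange * σ with hτ
    have hb : (Equiv.Perm.decomposeFin τ).1 = 0 := by
      have h1 : Equiv.Perm.decomposeFin.symm (Equiv.Perm.decomposeFin τ) 0
          = (Equiv.Perm.decomposeFin τ).1 := by
        rw [← Prod.mk.eta (p := Equiv.Perm.decomposeFin τ)]
        exact Equiv.Perm.decomposeFin_symm_apply_zero _ _
      rw [Equiv.symm_apply_apply] at h1
      rw [← h1, hτ, Equiv.Perm.mul_apply, hτ0]
    have key : Equiv.Perm.decomposeFin.symm ((0 : Fin (p + 1)), (Equiv.Perm.decomposeFin τ).2)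
        = τ := by
      conv_lhs => rw [← hb, Prod.mk.eta]
      rw [Equiv.symm_apply_apply]
    dsimp only
    rw [← hτ, key, hτ, inv_mul_cancel_left]

lemma permFactor_apply_zero (p : ℕ) (a : Fin (p + 1)) (π : Equiv.Perm (Fin p)) :
    permFactor p (a, π) 0 = a := by
  simp [permFactor, Equiv.Perm.mul_apply, Equiv.Perm.decomposeFin_symm_apply_zero,
    Equiv.Perm.inv_def, Fin.cycleRange_symm_zero]

lemma permFactor_apply_succ (p : ℕ) (a : Fin (p + 1)) (π : Equiv.Perm (Fin p)) (i : Fin p) :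
    permFactor p (a, π) i.succ = a.succAbove (π i) := by
  simp only [permFactor, Equiv.coe_fn_mk, Equiv.Perm.mul_apply,
    Equiv.Perm.decomposeFin_symm_apply_succ]
  rw [Equiv.swap_self]
  simp [Equiv.Perm.inv_def, Fin.cycleRange_symm_succ]

lemma permFactor_sign (p : ℕ) (a : Fin (p + 1)) (π : Equiv.Perm (Fin p)) :
    ((Equiv.Perm.sign (permFactor p (a, π)) : ℤ) : ℝ)
      = (-1 : ℝ) ^ (a : ℕ) * ((Equiv.Perm.sign π : ℤ) : ℝ) := by
  have : Equiv.Perm.sign (permFactor p (a, π)) = (-1) ^ (a : ℕ) * Equiv.Perm.sign π := by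
    simp [permFactor, Equiv.Perm.decomposeFin.symm_sign, Fin.sign_cycleRange, inv_pow]
  rw [this]
  push_cast
  ring

end Stmt14
namespace Stmt14
variable {n : ℕ}

lemma sign_sq (p : ℕ) (π : Equiv.Perm (Fin p)) :
    ((Equiv.Perm.sign π : ℤ) : ℝ) * ((Equiv.Perm.sign π : ℤ) : ℝ) = 1 := by
  rcases Int.units_eq_one_or (Equiv.Perm.sign π) with h | h <;> rw [h] <;> norm_num

lemma lemmaA {p : ℕ} {f : Form n p} (hf : IsAltML f) (Φ : Fin (p + 1) → ℝ)
    (X : Fin (p + 1) → Evec n) :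
    ∑ σ : Equiv.Perm (Fin (p + 1)),
        ((Equiv.Perm.sign σ : ℤ) : ℝ) * Φ (σ 0) * f (fun i => X (σ i.succ))
      = (p.factorial : ℝ) *
          ∑ a : Fin (p + 1), (-1 : ℝ) ^ (a : ℕ) * Φ a * f (fun i => X (a.succAbove i)) := by
  rw [← Equiv.sum_comp (permFactor p)
    (fun σ => ((Equiv.Perm.sign σ : ℤ) : ℝ) * Φ (σ 0) * f (fun i => X (σ i.succ)))]
  rw [Fintype.sum_prod_type, Finset.mul_sum]
  refine Finset.sum_congr rfl fun a _ => ?_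
  have step : ∀ π : Equiv.Perm (Fin p),
      ((Equiv.Perm.sign (permFactor p (a, π)) : ℤ) : ℝ) * Φ (permFactor p (a, π) 0) *
          f (fun i => X (permFactor p (a, π) i.succ))
        = (-1 : ℝ) ^ (a : ℕ) * Φ a * f (fun i => X (a.succAbove i)) := by
    intro π
    rw [permFactor_sign, permFactor_apply_zero]
    simp only [permFactor_apply_succ]
    have hs := altml_map_perm hf (fun i => X (a.succAbove i)) π
    rw [hs]
    linear_combination ((-1 : ℝ) ^ (a : ℕ) * Φ a * f (fun i => X (a.succAbove i))) * sign_sq p π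
  rw [Finset.sum_congr rfl fun π _ => step π, Finset.sum_const, Finset.card_univ,
    Fintype.card_perm, Fintype.card_fin, nsmul_eq_mul]

end Stmt14
namespace Stmt14
variable {n : ℕ}

lemma inner_ebasis (i : Fin n) (u : Evec n) : ⟪ebasis n i, u⟫ = u i := by
  simp [ebasis, EuclideanSpace.inner_single_left]

lemma euclid_sum (u : Evec n) : ∑ i, ⟪ebasis n i, u⟫ • ebasis n i = u := by
  have := (EuclideanSpace.basisFun (Fin n) ℝ).sum_repr' u
  simpa [ebasis, EuclideanSpace.basisFun_apply] using this

lemma bilin_expand {h : Evec n → Evec n → ℝ} (hh : IsBilin h) (u w : Evec n) :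
    h u w = ∑ i, ∑ j, h (ebasis n i) (ebasis n j) * (⟪ebasis n i, u⟫ * ⟪ebasis n j, w⟫) := by
  have key1 : ∀ v : Evec n, h u v = ∑ i, ⟪ebasis n i, u⟫ * h (ebasis n i) v := by
    intro v
    have L : IsLinearMap ℝ (fun x => h x v) := hh.1 v
    conv_lhs => rw [← euclid_sum u]
    rw [show h (∑ i, ⟪ebasis n i, u⟫ • ebasis n i) v
        = (IsLinearMap.mk' _ L) (∑ i, ⟪ebasis n i, u⟫ • ebasis n i) from rfl, map_sum]
    simp [smul_eq_mul]
  have key2 : ∀ i, h (ebasis n i) w = ∑ j, ⟪ebasis n j, w⟫ * h (ebasis n i) (ebasis n j) := by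
    intro i
    have L : IsLinearMap ℝ (h (ebasis n i)) := hh.2 (ebasis n i)
    conv_lhs => rw [← euclid_sum w]
    rw [show h (ebasis n i) (∑ j, ⟪ebasis n j, w⟫ • ebasis n j)
        = (IsLinearMap.mk' _ L) (∑ j, ⟪ebasis n j, w⟫ • ebasis n j) from rfl, map_sum]
    simp [smul_eq_mul]
  rw [key1 w]
  refine Finset.sum_congr rfl fun i _ => ?_
  rw [key2 i, Finset.mul_sum]
  refine Finset.sum_congr rfl fun j _ => ?_
  ring

end Stmt14
namespace Stmt14
variable {n : ℕ}

lemma embDF_self {P Q : ℕ} (ω : DF n P Q) : embDF P Q ω P Q = ω := by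
  simp [embDF]

lemma embDF_neg {P Q p' q' : ℕ} (ω : DF n P Q) (hc : ¬(p' = P ∧ q' = Q)) :
    embDF P Q ω p' q' = 0 := dif_neg hc

lemma embDF_apply_pos {P Q p' q' : ℕ} (ω : DF n P Q) (h1 : p' = P) (h2 : q' = Q)
    (x : Fin p' → Evec n) (y : Fin q' → Evec n) :
    embDF P Q ω p' q' x y
      = ω (fun i => x (Fin.cast h1.symm i)) (fun j => y (Fin.cast h2.symm j)) := by
  subst h1; subst h2
  rw [embDF_self]
  simp [Fin.cast]

lemma wedgeCR_zero {p q : ℕ} (f : Evec n → ℝ) : wedgeCR f (0 : DF n p q) = 0 := by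
  funext x y; simp [wedgeCR]

lemma wedgeCL_zero {p q : ℕ} (f : Evec n → ℝ) : wedgeCL f (0 : DF n p q) = 0 := by
  funext x y; simp [wedgeCL]

lemma iotaR'_zero {p q : ℕ} (v : Evec n) : iotaR' v (0 : DF n p (q + 1)) = 0 := by
  funext x y; simp [iotaR']

lemma iotaL'_zero {p q : ℕ} (v : Evec n) : iotaL' v (0 : DF n (p + 1) q) = 0 := by
  funext x y; simp [iotaL']

lemma adRone_embDF_even {P Q : ℕ} (hQ : Even Q) (ω : DF n P (Q + 2)) (v : Evec n) :
    adRone v (embDF P (Q + 2) ω) = embDF P (Q + 1) ((-2 : ℝ) • iotaR' v ω) := by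
  funext p' q'
  simp only [adRone, Pi.sub_apply]
  cases q' with
  | zero =>
    rw [embDF_neg _ (by omega)]
    simp [cliffLvR, cliffRvR]
  | succ k =>
    simp only [cliffLvR, cliffRvR]
    by_cases hp : p' = P
    · subst hp
      by_cases hk : k = Q
      · subst hk
        rw [embDF_neg _ (by omega), embDF_self, embDF_self,
          wedgeCR_zero]
        funext x y
        simp only [Pi.sub_apply, Pi.add_apply, Pi.smul_apply, Pi.zero_apply, smul_eq_mul,
          hQ.neg_one_pow]
        ring
      · by_cases hk2 : k = Q + 2
        · subst hk2
          rw [embDF_self, embDF_neg _ (by omega), embDF_neg _ (by omega), iotaR'_zero]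
          funext x y
          simp only [Pi.sub_apply, Pi.add_apply, Pi.smul_apply, Pi.zero_apply, smul_eq_mul,
            (hQ.add even_two).neg_one_pow]
          ring
        · rw [embDF_neg _ (by omega), embDF_neg _ (by omega), embDF_neg _ (by omega),
            wedgeCR_zero, iotaR'_zero]
          simp
    · rw [embDF_neg _ (by omega), embDF_neg _ (by omega), embDF_neg _ (by omega),
        wedgeCR_zero, iotaR'_zero]
      simp

end Stmt14
namespace Stmt14
variable {n : ℕ}

lemma adRone_embDF_zero {P : ℕ} (ω : DF n P 0) (v : Evec n) :
    adRone v (embDF P 0 ω) = 0 := by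
  funext p' q'
  simp only [adRone, Pi.sub_apply]
  cases q' with
  | zero => simp [cliffLvR, cliffRvR]
  | succ k =>
    simp only [cliffLvR, cliffRvR]
    by_cases hpk : p' = P ∧ k = 0
    · obtain ⟨rfl, rfl⟩ := hpk
      rw [embDF_self, embDF_neg _ (by omega), iotaR'_zero]
      funext x y
      simp only [Pi.sub_apply, Pi.add_apply, Pi.smul_apply, Pi.zero_apply, smul_eq_mul, pow_zero]
      ring
    · rw [embDF_neg _ (by omega), embDF_neg _ (fun hc => hpk ⟨hc.1, by omega⟩),
        wedgeCR_zero, iotaR'_zero]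
      simp

lemma adRone_embDF_odd {P Q : ℕ} (hQ : Even Q) (ω : DF n P (Q + 1)) (v : Evec n) :
    adRone v (embDF P (Q + 1) ω)
      = embDF P (Q + 2) ((2 : ℝ) • wedgeCR (fun u => ⟪v, u⟫) ω) := by
  funext p' q'
  simp only [adRone, Pi.sub_apply]
  cases q' with
  | zero =>
    rw [embDF_neg _ (by omega)]
    simp [cliffLvR, cliffRvR]
  | succ k =>
    simp only [cliffLvR, cliffRvR]
    by_cases hp : p' = P
    · subst hp
      by_cases hk : k = Q + 1
      · subst hk
        rw [embDF_self, embDF_self, embDF_neg _ (by omega), iotaR'_zero]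
        have hodd : (-1 : ℝ) ^ (Q + 1) = -1 := (hQ.add_one).neg_one_pow
        funext x y
        simp only [Pi.sub_apply, Pi.add_apply, Pi.smul_apply, Pi.zero_apply, smul_eq_mul, hodd]
        ring
      · by_cases hk2 : k + 2 = Q + 1
        · have hQk : Q = k + 1 := by omega
          subst hQk
          have hkodd : Odd k := Nat.odd_iff.mpr (by rcases hQ with ⟨m, hm⟩; omega)
          rw [embDF_neg _ (by omega), embDF_self, embDF_neg _ (by omega), wedgeCR_zero]
          funext x y
          simp only [Pi.sub_apply, Pi.add_apply, Pi.smul_apply, Pi.zero_apply, smul_eq_mul,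
            hkodd.neg_one_pow]
          ring
        · rw [embDF_neg _ (by omega), embDF_neg _ (by omega), embDF_neg _ (by omega),
            wedgeCR_zero, iotaR'_zero]
          simp
    · rw [embDF_neg _ (by omega), embDF_neg _ (by omega), embDF_neg _ (by omega),
        wedgeCR_zero, iotaR'_zero]
      simp

lemma adLone_embDF_even {P Q : ℕ} (hP : Even P) (ω : DF n (P + 2) Q) (v : Evec n) :
    adLone v (embDF (P + 2) Q ω) = embDF (P + 1) Q ((-2 : ℝ) • iotaL' v ω) := by
  funext p' q'
  simp only [adLone, Pi.sub_apply]
  cases p' with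
  | zero =>
    rw [embDF_neg _ (by omega)]
    simp [cliffLvL, cliffRvL]
  | succ k =>
    simp only [cliffLvL, cliffRvL]
    by_cases hq : q' = Q
    · subst hq
      by_cases hk : k = P
      · subst hk
        rw [embDF_neg _ (by omega), embDF_self, embDF_self, wedgeCL_zero]
        funext x y
        simp only [Pi.sub_apply, Pi.add_apply, Pi.smul_apply, Pi.zero_apply, smul_eq_mul,
          hP.neg_one_pow]
        ring
      · by_cases hk2 : k = P + 2
        · subst hk2
          rw [embDF_self, embDF_neg _ (by omega), embDF_neg _ (by omega), iotaL'_zero]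
          funext x y
          simp only [Pi.sub_apply, Pi.add_apply, Pi.smul_apply, Pi.zero_apply, smul_eq_mul,
            (hP.add even_two).neg_one_pow]
          ring
        · rw [embDF_neg _ (by omega), embDF_neg _ (by omega), embDF_neg _ (by omega),
            wedgeCL_zero, iotaL'_zero]
          simp
    · rw [embDF_neg _ (by omega), embDF_neg _ (by omega), embDF_neg _ (by omega),
        wedgeCL_zero, iotaL'_zero]
      simp

lemma adLone_embDF_zero {Q : ℕ} (ω : DF n 0 Q) (v : Evec n) :
    adLone v (embDF 0 Q ω) = 0 := by
  funext p' q'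
  simp only [adLone, Pi.sub_apply]
  cases p' with
  | zero => simp [cliffLvL, cliffRvL]
  | succ k =>
    simp only [cliffLvL, cliffRvL]
    by_cases hpk : k = 0 ∧ q' = Q
    · obtain ⟨rfl, rfl⟩ := hpk
      rw [embDF_self, embDF_neg _ (by omega), iotaL'_zero]
      funext x y
      simp only [Pi.sub_apply, Pi.add_apply, Pi.smul_apply, Pi.zero_apply, smul_eq_mul, pow_zero]
      ring
    · rw [embDF_neg _ (fun hc => hpk ⟨by omega, hc.2⟩), embDF_neg _ (fun hc => hpk ⟨by omega, hc.2⟩),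
        wedgeCL_zero, iotaL'_zero]
      simp

lemma adLone_embDF_odd {P Q : ℕ} (hP : Even P) (ω : DF n (P + 1) Q) (v : Evec n) :
    adLone v (embDF (P + 1) Q ω)
      = embDF (P + 2) Q ((2 : ℝ) • wedgeCL (fun u => ⟪v, u⟫) ω) := by
  funext p' q'
  simp only [adLone, Pi.sub_apply]
  cases p' with
  | zero =>
    rw [embDF_neg _ (by omega)]
    simp [cliffLvL, cliffRvL]
  | succ k =>
    simp only [cliffLvL, cliffRvL]
    by_cases hq : q' = Q
    · subst hq
      by_cases hk : k = P + 1
      · subst hk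
        rw [embDF_self, embDF_self, embDF_neg _ (by omega), iotaL'_zero]
        have hodd : (-1 : ℝ) ^ (P + 1) = -1 := (hP.add_one).neg_one_pow
        funext x y
        simp only [Pi.sub_apply, Pi.add_apply, Pi.smul_apply, Pi.zero_apply, smul_eq_mul, hodd]
        ring
      · by_cases hk2 : k + 2 = P + 1
        · have hPk : P = k + 1 := by omega
          subst hPk
          have hkodd : Odd k := Nat.odd_iff.mpr (by rcases hP with ⟨m, hm⟩; omega)
          rw [embDF_neg _ (by omega), embDF_self, embDF_neg _ (by omega), wedgeCL_zero]
          funext x y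
          simp only [Pi.sub_apply, Pi.add_apply, Pi.smul_apply, Pi.zero_apply, smul_eq_mul,
            hkodd.neg_one_pow]
          ring
        · rw [embDF_neg _ (by omega), embDF_neg _ (by omega), embDF_neg _ (by omega),
            wedgeCL_zero, iotaL'_zero]
          simp
    · rw [embDF_neg _ (by omega), embDF_neg _ (by omega), embDF_neg _ (by omega),
        wedgeCL_zero, iotaL'_zero]
      simp

end Stmt14
namespace Stmt14
variable {n : ℕ}

lemma swap4 {p : ℕ} (F : Fin n → Fin n → Fin (p + 1) → Fin (p + 1) → ℝ) :
    ∑ i, ∑ j, ∑ a, ∑ b, F i j a b = ∑ a, ∑ b, ∑ i, ∑ j, F i j a b :=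
  calc ∑ i, ∑ j, ∑ a, ∑ b, F i j a b
      = ∑ i, ∑ a, ∑ j, ∑ b, F i j a b :=
        Finset.sum_congr rfl fun i _ => Finset.sum_comm
    _ = ∑ a, ∑ i, ∑ j, ∑ b, F i j a b := Finset.sum_comm
    _ = ∑ a, ∑ i, ∑ b, ∑ j, F i j a b :=
        Finset.sum_congr rfl fun a _ => Finset.sum_congr rfl fun i _ => Finset.sum_comm
    _ = ∑ a, ∑ b, ∑ i, ∑ j, F i j a b :=
        Finset.sum_congr rfl fun a _ => Finset.sum_comm

lemma keyLHS {p : ℕ} {h : Evec n → Evec n → ℝ} (hh : IsBilin h) (ω : DF n p p)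
    (x y : Fin (p + 1) → Evec n) :
    ∑ i, ∑ j, h (ebasis n i) (ebasis n j) *
        wedgeCL (fun u => ⟪ebasis n i, u⟫) (wedgeCR (fun u => ⟪ebasis n j, u⟫) ω) x y
      = ∑ a : Fin (p + 1), ∑ b : Fin (p + 1),
          (-1 : ℝ) ^ (a : ℕ) * (-1 : ℝ) ^ (b : ℕ) * h (x a) (y b) *
            ω (fun i => x (a.succAbove i)) (fun j => y (b.succAbove j)) := by
  have e1 : ∀ i j, h (ebasis n i) (ebasis n j) *
        wedgeCL (fun u => ⟪ebasis n i, u⟫) (wedgeCR (fun u => ⟪ebasis n j, u⟫) ω) x y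
      = ∑ a : Fin (p + 1), ∑ b : Fin (p + 1),
          ((-1 : ℝ) ^ (a : ℕ) * (-1 : ℝ) ^ (b : ℕ)) *
            (h (ebasis n i) (ebasis n j) * (⟪ebasis n i, x a⟫ * ⟪ebasis n j, y b⟫)) *
            ω (fun i => x (a.succAbove i)) (fun j => y (b.succAbove j)) := by
    intro i j
    simp only [wedgeCL, wedgeCR, Function.comp_def, Finset.mul_sum]
    refine Finset.sum_congr rfl fun a _ => ?_
    refine Finset.sum_congr rfl fun b _ => ?_
    ring
  rw [Finset.sum_congr rfl fun i _ => Finset.sum_congr rfl fun j _ => e1 i j, swap4]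
  refine Finset.sum_congr rfl fun a _ => Finset.sum_congr rfl fun b _ => ?_
  have hb := bilin_expand hh (x a) (y b)
  calc ∑ i, ∑ j, ((-1 : ℝ) ^ (a : ℕ) * (-1 : ℝ) ^ (b : ℕ)) *
          (h (ebasis n i) (ebasis n j) * (⟪ebasis n i, x a⟫ * ⟪ebasis n j, y b⟫)) *
          ω (fun i => x (a.succAbove i)) (fun j => y (b.succAbove j))
      = (∑ i, ∑ j, h (ebasis n i) (ebasis n j) * (⟪ebasis n i, x a⟫ * ⟪ebasis n j, y b⟫)) *
          ((-1 : ℝ) ^ (a : ℕ) * (-1 : ℝ) ^ (b : ℕ) *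
            ω (fun i => x (a.succAbove i)) (fun j => y (b.succAbove j))) := by
        rw [Finset.sum_mul]
        refine Finset.sum_congr rfl fun i _ => ?_
        rw [Finset.sum_mul]
        refine Finset.sum_congr rfl fun j _ => by ring
    _ = _ := by rw [← hb]; ring

end Stmt14
namespace Stmt14
variable {n : ℕ}

lemma keyRHS {p : ℕ} (h : Evec n → Evec n → ℝ) {ω : DF n p p} (hω : IsDF ω)
    (x y : Fin (p + 1) → Evec n) :
    wedge (rho h) ω (fun a : Fin (1 + p) => x (Fin.cast (by omega) a))
          (fun b : Fin (1 + p) => y (Fin.cast (by omega) b))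
      = ∑ a : Fin (p + 1), ∑ b : Fin (p + 1),
          (-1 : ℝ) ^ (a : ℕ) * (-1 : ℝ) ^ (b : ℕ) * h (x a) (y b) *
            ω (fun i => x (a.succAbove i)) (fun j => y (b.succAbove j)) := by
  have pf : p + 1 = 1 + p := by omega
  have cast_cancel : ∀ (pf' : 1 + p = p + 1) (t : Fin (p + 1)),
      Fin.cast pf' (finCongr pf t) = t := by
    intro pf' t; ext; simp
  have congr_castAdd : ∀ i : Fin 1, (finCongr pf).symm (Fin.castAdd p i) = 0 := by
    intro i
    have : (i : ℕ) = 0 := by omega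
    ext; simp [this]
  have congr_natAdd : ∀ i : Fin p, (finCongr pf).symm (Fin.natAdd 1 i) = i.succ := by
    intro i; ext; simp [Nat.add_comm]
  -- reindex the two permutation sums
  have reindex : wedge (rho h) ω (fun a : Fin (1 + p) => x (Fin.cast (by omega) a))
          (fun b : Fin (1 + p) => y (Fin.cast (by omega) b))
      = (((Nat.factorial 1 * Nat.factorial p * Nat.factorial 1 * Nat.factorial p : ℕ) : ℝ))⁻¹ *
          ∑ σ : Equiv.Perm (Fin (p + 1)), ∑ τ : Equiv.Perm (Fin (p + 1)),
            ((Equiv.Perm.sign σ : ℤ) : ℝ) * ((Equiv.Perm.sign τ : ℤ) : ℝ) *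
              h (x (σ 0)) (y (τ 0)) *
              ω (fun i => x (σ i.succ)) (fun j => y (τ j.succ)) := by
    rw [wedge]
    congr 1
    rw [← Equiv.sum_comp ((finCongr pf).permCongr)]
    refine Finset.sum_congr rfl fun σ _ => ?_
    rw [← Equiv.sum_comp ((finCongr pf).permCongr)]
    refine Finset.sum_congr rfl fun τ _ => ?_
    simp only [Equiv.permCongr_apply, Equiv.Perm.sign_permCongr, rho, cast_cancel,
      congr_castAdd, congr_natAdd]
  rw [reindex]
  -- now apply lemmaA in σ then in τ
  have inner1 : ∀ τ : Equiv.Perm (Fin (p + 1)),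
      ∑ σ : Equiv.Perm (Fin (p + 1)),
          ((Equiv.Perm.sign σ : ℤ) : ℝ) * ((Equiv.Perm.sign τ : ℤ) : ℝ) *
            h (x (σ 0)) (y (τ 0)) * ω (fun i => x (σ i.succ)) (fun j => y (τ j.succ))
        = (p.factorial : ℝ) * ∑ a : Fin (p + 1),
            (-1 : ℝ) ^ (a : ℕ) * (((Equiv.Perm.sign τ : ℤ) : ℝ) * h (x a) (y (τ 0))) *
              ω (fun i => x (a.succAbove i)) (fun j => y (τ j.succ)) := by
    intro τ
    rw [← lemmaA (f := fun X' => ω X' (fun j => y (τ j.succ))) (hω.1 _)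
      (fun a => ((Equiv.Perm.sign τ : ℤ) : ℝ) * h (x a) (y (τ 0))) x]
    exact Finset.sum_congr rfl fun σ _ => by ring
  have inner2 : ∀ a : Fin (p + 1),
      ∑ τ : Equiv.Perm (Fin (p + 1)),
          (-1 : ℝ) ^ (a : ℕ) * (((Equiv.Perm.sign τ : ℤ) : ℝ) * h (x a) (y (τ 0))) *
            ω (fun i => x (a.succAbove i)) (fun j => y (τ j.succ))
        = (p.factorial : ℝ) * ∑ b : Fin (p + 1),
            (-1 : ℝ) ^ (a : ℕ) * (-1 : ℝ) ^ (b : ℕ) * h (x a) (y b) *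
              ω (fun i => x (a.succAbove i)) (fun j => y (b.succAbove j)) := by
    intro a
    have hA := lemmaA (f := fun Y' => ω (fun i => x (a.succAbove i)) Y') (hω.2 _)
      (fun b => (-1 : ℝ) ^ (a : ℕ) * h (x a) (y b)) y
    calc ∑ τ : Equiv.Perm (Fin (p + 1)),
          (-1 : ℝ) ^ (a : ℕ) * (((Equiv.Perm.sign τ : ℤ) : ℝ) * h (x a) (y (τ 0))) *
            ω (fun i => x (a.succAbove i)) (fun j => y (τ j.succ))
        = ∑ τ : Equiv.Perm (Fin (p + 1)),
            ((Equiv.Perm.sign τ : ℤ) : ℝ) * ((-1 : ℝ) ^ (a : ℕ) * h (x a) (y (τ 0))) *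
              ω (fun i => x (a.succAbove i)) (fun j => y (τ j.succ)) :=
          Finset.sum_congr rfl fun τ _ => by ring
      _ = (p.factorial : ℝ) * ∑ b : Fin (p + 1),
            (-1 : ℝ) ^ (b : ℕ) * ((-1 : ℝ) ^ (a : ℕ) * h (x a) (y b)) *
              ω (fun i => x (a.succAbove i)) (fun j => y (b.succAbove j)) := hA
      _ = _ := by
          congr 1
          exact Finset.sum_congr rfl fun b _ => by ring
  calc (((Nat.factorial 1 * Nat.factorial p * Nat.factorial 1 * Nat.factorial p : ℕ) : ℝ))⁻¹ *
          ∑ σ : Equiv.Perm (Fin (p + 1)), ∑ τ : Equiv.Perm (Fin (p + 1)),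
            ((Equiv.Perm.sign σ : ℤ) : ℝ) * ((Equiv.Perm.sign τ : ℤ) : ℝ) *
              h (x (σ 0)) (y (τ 0)) * ω (fun i => x (σ i.succ)) (fun j => y (τ j.succ))
      = (((Nat.factorial 1 * Nat.factorial p * Nat.factorial 1 * Nat.factorial p : ℕ) : ℝ))⁻¹ *
          ((p.factorial : ℝ) * ((p.factorial : ℝ) *
            ∑ a : Fin (p + 1), ∑ b : Fin (p + 1),
              (-1 : ℝ) ^ (a : ℕ) * (-1 : ℝ) ^ (b : ℕ) * h (x a) (y b) *
                ω (fun i => x (a.succAbove i)) (fun j => y (b.succAbove j)))) := by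
        congr 1
        rw [Finset.sum_comm]
        rw [Finset.sum_congr rfl fun τ _ => inner1 τ, ← Finset.mul_sum]
        congr 1
        rw [Finset.sum_comm, Finset.sum_congr rfl fun a _ => inner2 a, ← Finset.mul_sum]
    _ = _ := by
        have h1 : ((Nat.factorial 1 * Nat.factorial p * Nat.factorial 1 * Nat.factorial p : ℕ) : ℝ)
            = (p.factorial : ℝ) * (p.factorial : ℝ) := by
          push_cast [Nat.factorial_one]
          ring
        rw [h1]
        have h2 : (p.factorial : ℝ) ≠ 0 := Nat.cast_ne_zero.mpr p.factorial_ne_zero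
        field_simp
end Stmt14
namespace Stmt14
variable {n : ℕ}

lemma embDF_zero {P Q : ℕ} : embDF P Q (0 : DF n P Q) = 0 := by
  funext p' q'
  by_cases hc : p' = P ∧ q' = Q
  · obtain ⟨rfl, rfl⟩ := hc
    rw [embDF_self]
    rfl
  · rw [embDF_neg _ hc]
    rfl

lemma adLone_zero (v : Evec n) : adLone v (0 : MixedDF n) = 0 := by
  funext p' q'
  simp only [adLone, Pi.sub_apply]
  cases p' with
  | zero => simp [cliffLvL, cliffRvL]
  | succ k =>
    simp only [cliffLvL, cliffRvL]
    show wedgeCL _ 0 - iotaL' v 0 - _ • (wedgeCL _ 0 + iotaL' v 0) = _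
    rw [wedgeCL_zero, iotaL'_zero]
    simp

lemma wedgeCL_smul {p q : ℕ} (f : Evec n → ℝ) (c : ℝ) (ω : DF n p q) :
    wedgeCL f (c • ω) = c • wedgeCL f ω := by
  funext x y
  simp only [wedgeCL, Pi.smul_apply, smul_eq_mul, Finset.mul_sum]
  exact Finset.sum_congr rfl fun i _ => by ring

end Stmt14
open Stmt14

/-- For a `(1,1)` double form `h` and a `(p,p)` double form `ω`:
if `p` is even then `h # ω = 4 ι_h ω` and if `p` is odd then `h # ω = 4 h·ω`. -/
theorem statement14 (n p : ℕ) (h : Evec n → Evec n → ℝ) (hh : IsBilin h)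
    (ω : DF n p p) (hω : IsDF ω) :
    (Even p →
      sharp11 h (embDF p p ω) = (4 : ℝ) • embDF (p - 1) (p - 1) (iotaH h ω)) ∧
    (Odd p →
      sharp11 h (embDF p p ω) = (4 : ℝ) • embDF (1 + p) (1 + p) (wedge (rho h) ω)) := by
  constructor
  · intro hp
    rcases p with _ | _ | m
    · -- p = 0
      have hA : ∀ j : Fin n, adRone (ebasis n j) (embDF 0 0 ω) = 0 :=
        fun j => adRone_embDF_zero ω _
      have : sharp11 h (embDF 0 0 ω) = 0 := by
        show (∑ i, ∑ j, _ • adLone (ebasis n i) (adRone (ebasis n j) (embDF 0 0 ω))) = 0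
        simp [hA, adLone_zero]
      rw [this, show (iotaH h ω : DF n (0 - 1) (0 - 1)) = 0 from rfl, embDF_zero, smul_zero]
    · exact absurd hp (by simp)
    · -- p = m + 2
      have hm : Even m := by rcases hp with ⟨t, ht⟩; exact ⟨t - 1, by omega⟩
      have step1 : ∀ j : Fin n, adRone (ebasis n j) (embDF (m + 2) (m + 2) ω)
          = embDF (m + 2) (m + 1) ((-2 : ℝ) • iotaR' (ebasis n j) ω) :=
        fun j => adRone_embDF_even hm ω _
      have step2 : ∀ (i : Fin n) (W : DF n (m + 2) (m + 1)),
          adLone (ebasis n i) (embDF (m + 2) (m + 1) W)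
            = embDF (m + 1) (m + 1) ((-2 : ℝ) • iotaL' (ebasis n i) W) :=
        fun i W => adLone_embDF_even hm W _
      funext p' q' x y
      show _ = ((4 : ℝ) • embDF (m + 1) (m + 1) (show DF n (m + 1) (m + 1) from iotaH h ω)) p' q' x y
      simp only [sharp11, Finset.sum_apply, Pi.smul_apply, smul_eq_mul]
      simp_rw [step1, step2]
      by_cases hc : p' = m + 1 ∧ q' = m + 1
      · obtain ⟨rfl, rfl⟩ := hc
        simp only [embDF_self, Pi.smul_apply, smul_eq_mul, iotaL', iotaR', iotaH]
        rw [Finset.mul_sum]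
        refine Finset.sum_congr rfl fun i _ => ?_
        rw [Finset.mul_sum]
        exact Finset.sum_congr rfl fun j _ => by ring
      · have hz : ∀ ω' : DF n (m + 1) (m + 1), embDF (m + 1) (m + 1) ω' p' q' = 0 :=
          fun ω' => embDF_neg ω' hc
        simp only [hz, Pi.zero_apply, mul_zero, Finset.sum_const_zero, Pi.smul_apply,
          smul_eq_mul]
  · intro hp
    obtain ⟨t, rfl⟩ := hp
    have ht : Even (2 * t) := ⟨t, two_mul t⟩
    have step1 : ∀ j : Fin n, adRone (ebasis n j) (embDF (2 * t + 1) (2 * t + 1) ω)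
        = embDF (2 * t + 1) (2 * t + 2)
            ((2 : ℝ) • wedgeCR (fun u => ⟪ebasis n j, u⟫) ω) :=
      fun j => adRone_embDF_odd ht ω _
    have step2 : ∀ (i : Fin n) (W : DF n (2 * t + 1) (2 * t + 2)),
        adLone (ebasis n i) (embDF (2 * t + 1) (2 * t + 2) W)
          = embDF (2 * t + 2) (2 * t + 2)
              ((2 : ℝ) • wedgeCL (fun u => ⟪ebasis n i, u⟫) W) :=
      fun i W => adLone_embDF_odd ht W _
    funext p' q' x y
    simp only [sharp11, Finset.sum_apply, Pi.smul_apply, smul_eq_mul]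
    simp_rw [step1, step2]
    by_cases hc : p' = 2 * t + 2 ∧ q' = 2 * t + 2
    · obtain ⟨rfl, rfl⟩ := hc
      simp only [embDF_self]
      rw [embDF_apply_pos (wedge (rho h) ω) (by omega) (by omega) x y]
      have hkey : ∑ i, ∑ j, h (ebasis n i) (ebasis n j) *
            wedgeCL (fun u => ⟪ebasis n i, u⟫)
              (wedgeCR (fun u => ⟪ebasis n j, u⟫) ω) x y
          = wedge (rho h) ω
              (fun a : Fin (1 + (2 * t + 1)) => x (Fin.cast (by omega) a))
              (fun b : Fin (1 + (2 * t + 1)) => y (Fin.cast (by omega) b)) :=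
        (keyLHS hh ω x y).trans (keyRHS h hω x y).symm
      have hsm : ∀ i j : Fin n,
          ((2 : ℝ) • wedgeCL (fun u => ⟪ebasis n i, u⟫)
            ((2 : ℝ) • wedgeCR (fun u => ⟪ebasis n j, u⟫) ω)) x y
          = 4 * wedgeCL (fun u => ⟪ebasis n i, u⟫)
              (wedgeCR (fun u => ⟪ebasis n j, u⟫) ω) x y := by
        intro i j
        rw [wedgeCL_smul, smul_smul]
        norm_num
      simp_rw [hsm]
      calc ∑ i, ∑ j, h (ebasis n i) (ebasis n j) *
              (4 * wedgeCL (fun u => ⟪ebasis n i, u⟫)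
                (wedgeCR (fun u => ⟪ebasis n j, u⟫) ω) x y)
          = 4 * ∑ i, ∑ j, h (ebasis n i) (ebasis n j) *
              wedgeCL (fun u => ⟪ebasis n i, u⟫)
                (wedgeCR (fun u => ⟪ebasis n j, u⟫) ω) x y := by
            rw [Finset.mul_sum]
            refine Finset.sum_congr rfl fun i _ => ?_
            rw [Finset.mul_sum]
            exact Finset.sum_congr rfl fun j _ => by ring
        _ = _ := by rw [hkey]
    · have hz : ∀ ω' : DF n (2 * t + 2) (2 * t + 2),
          embDF (2 * t + 2) (2 * t + 2) ω' p' q' = 0 :=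
        fun ω' => embDF_neg ω' hc
      simp only [hz, Pi.zero_apply, mul_zero, Finset.sum_const_zero, Pi.smul_apply, smul_eq_mul]
      rw [embDF_neg _ (by omega)]
      simp
end
end
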